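/- arXiv:2506.11426 — 7 statements merged into one kernel-verified Lean document; each statement's English description precedes it below -/
import Mathlib

section
/- Let Ω ⊆ ℂ² be a nonempty open set, let a, b, c be holomorphic on Ω, and let f be a nowhere-vanishing holomorphic function on Ω satisfying (∂x f)/f = −b. Define a' = a + (∂y f)/f and c' = c + a·(∂x f)/f + b·(∂y f)/f + (∂x∂y f)/f. Then: (i) for every holomorphic u on Ω, (1/f)·(∂x∂y(f·u) + a·∂x(f·u) + b·∂y(f·u) + c·(f·u)) = ∂x∂y u + a'·∂x u + c'·u (the ∂y-term vanishes); and (ii) ∂x a' = h − k and c' = −k on Ω, where h = ∂x a + a·b − c and k = ∂y b + a·b − c are the invariants of M. -/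
/-- Partial derivative in the first (x) variable of a function on ℂ². -/
noncomputable def pdx (u : ℂ × ℂ → ℂ) : ℂ × ℂ → ℂ :=
  fun p => deriv (fun t => u (t, p.2)) p.1

/-- Partial derivative in the second (y) variable of a function on ℂ². -/
noncomputable def pdy (u : ℂ × ℂ → ℂ) : ℂ × ℂ → ℂ :=
  fun p => deriv (fun t => u (p.1, t)) p.2

lemma diffX {g : ℂ × ℂ → ℂ} {x y : ℂ} (hg : DifferentiableAt ℂ g (x, y)) :
    DifferentiableAt ℂ (fun t => g (t, y)) x :=
  hg.comp x (differentiableAt_id.prodMk (differentiableAt_const y))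

lemma diffY {g : ℂ × ℂ → ℂ} {x y : ℂ} (hg : DifferentiableAt ℂ g (x, y)) :
    DifferentiableAt ℂ (fun t => g (x, t)) y :=
  hg.comp y ((differentiableAt_const x).prodMk differentiableAt_id)

lemma pdx_mul {g u : ℂ × ℂ → ℂ} {p : ℂ × ℂ}
    (h1 : DifferentiableAt ℂ (fun t => g (t, p.2)) p.1)
    (h2 : DifferentiableAt ℂ (fun t => u (t, p.2)) p.1) :
    pdx (fun q => g q * u q) p = pdx g p * u p + g p * pdx u p :=
  deriv_mul h1 h2

lemma pdy_mul {g u : ℂ × ℂ → ℂ} {p : ℂ × ℂ}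
    (h1 : DifferentiableAt ℂ (fun t => g (p.1, t)) p.2)
    (h2 : DifferentiableAt ℂ (fun t => u (p.1, t)) p.2) :
    pdy (fun q => g q * u q) p = pdy g p * u p + g p * pdy u p :=
  deriv_mul h1 h2

lemma pdx_add {g u : ℂ × ℂ → ℂ} {p : ℂ × ℂ}
    (h1 : DifferentiableAt ℂ (fun t => g (t, p.2)) p.1)
    (h2 : DifferentiableAt ℂ (fun t => u (t, p.2)) p.1) :
    pdx (fun q => g q + u q) p = pdx g p + pdx u p :=
  deriv_add h1 h2

lemma pdx_div {g u : ℂ × ℂ → ℂ} {p : ℂ × ℂ}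
    (h1 : DifferentiableAt ℂ (fun t => g (t, p.2)) p.1)
    (h2 : DifferentiableAt ℂ (fun t => u (t, p.2)) p.1) (h0 : u p ≠ 0) :
    pdx (fun q => g q / u q) p = (pdx g p * u p - g p * pdx u p) / u p ^ 2 :=
  deriv_div h1 h2 h0

lemma pdy_neg {g : ℂ × ℂ → ℂ} {p : ℂ × ℂ} :
    pdy (fun q => -(g q)) p = -(pdy g p) :=
  deriv.neg

lemma pdx_congr_nhds {g g' : ℂ × ℂ → ℂ} {p : ℂ × ℂ} (h : g =ᶠ[nhds p] g') :
    pdx g p = pdx g' p :=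
  Filter.EventuallyEq.deriv_eq
    (h.comp_tendsto ((continuous_id.prodMk continuous_const).tendsto' p.1 p rfl))

lemma pdy_congr_nhds {g g' : ℂ × ℂ → ℂ} {p : ℂ × ℂ} (h : g =ᶠ[nhds p] g') :
    pdy g p = pdy g' p :=
  Filter.EventuallyEq.deriv_eq
    (h.comp_tendsto ((continuous_const.prodMk continuous_id).tendsto' p.2 p rfl))

open Metric Complex Filter in
lemma mixed {Ω : Set (ℂ × ℂ)} (hΩ : IsOpen Ω) {g : ℂ × ℂ → ℂ} (hg : DifferentiableOn ℂ g Ω)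
    {p : ℂ × ℂ} (hp : p ∈ Ω) :
    DifferentiableAt ℂ (fun t => pdy g (t, p.2)) p.1 ∧
    HasDerivAt (fun t => pdx g (p.1, t)) (pdx (pdy g) p) p.2 := by
  obtain ⟨r, hr0, hrΩ⟩ : ∃ r > 0, closedBall p r ⊆ Ω := by
    rcases Metric.nhds_basis_closedBall.mem_iff.1 (hΩ.mem_nhds hp) with ⟨r, hr0, hr⟩
    exact ⟨r, hr0, hr⟩
  have hmem : ∀ x ∈ closedBall p.1 r, ∀ y ∈ closedBall p.2 r, ((x, y) : ℂ × ℂ) ∈ Ω := by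
    intro x hx y hy
    apply hrΩ
    simp only [Metric.mem_closedBall] at *
    rw [Prod.dist_eq]
    exact max_le hx hy
  obtain ⟨M, hM⟩ : ∃ M, ∀ q ∈ closedBall p r, ‖g q‖ ≤ M :=
    (isCompact_closedBall p r).exists_bound_of_continuousOn (hg.continuousOn.mono hrΩ)
  have hM0 : 0 ≤ M := le_trans (norm_nonneg _) (hM p (mem_closedBall_self hr0.le))
  have hx0 : p.1 ∈ closedBall p.1 r := mem_closedBall_self hr0.le
  have hy0 : p.2 ∈ closedBall p.2 r := mem_closedBall_self hr0.le
  have hsliceY : ∀ x ∈ closedBall p.1 r,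
      DifferentiableOn ℂ (fun y => g (x, y)) (closedBall p.2 r) := fun x hx =>
    hg.comp (((differentiable_const x).prodMk differentiable_id).differentiableOn)
      (fun y hy => hmem x hx y hy)
  have hval : ∀ x ∈ closedBall p.1 r, ∀ w ∈ ball p.2 r,
      (∮ z in C(p.2, r), (z - w)⁻¹ • g (x, z)) = (2 * Real.pi * Complex.I : ℂ) • g (x, w) :=
    fun x hx w hw => (hsliceY x hx).circleIntegral_sub_inv_smul hw
  have hder : ∀ x ∈ closedBall p.1 r,
      ((2 * Real.pi * Complex.I : ℂ)⁻¹ • ∮ z in C(p.2, r), ((z - p.2) ^ 2)⁻¹ • g (x, z))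
        = pdy g (x, p.2) := by
    intro x hx
    have hU : IsOpen {y : ℂ | (x, y) ∈ Ω} := hΩ.preimage (Continuous.prodMk_right x)
    exact Complex.two_pi_I_inv_smul_circleIntegral_sub_sq_inv_smul_of_differentiable hU
      (fun y hy => hmem x hx y hy)
      (hg.comp (((differentiable_const x).prodMk differentiable_id).differentiableOn)
        (fun y hy => hy))
      (mem_ball_self hr0)
  set Q : ℂ → ℂ → ℂ := fun h x => (g (x, p.2 + h) - g (x, p.2)) / h with hQdef
  -- the main estimate
  have hest : ∀ h : ℂ, h ≠ 0 → ‖h‖ ≤ r / 2 → ∀ x ∈ closedBall p.1 r,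
      ‖Q h x - pdy g (x, p.2)‖ ≤ ‖h‖ * (2 * M) / r ^ 2 := by
    intro h hh0 hhr x hx
    set y1 := p.2 + h with hy1def
    have hy1 : y1 ∈ ball p.2 r := by
      simp only [mem_ball, hy1def, dist_eq_norm, add_sub_cancel_left]
      calc ‖h‖ ≤ r / 2 := hhr
        _ < r := by linarith
    have hgxM : ∀ z ∈ sphere p.2 r, ‖g (x, z)‖ ≤ M := fun z hz =>
      hM (x, z) (by
        simp only [Metric.mem_closedBall, Prod.dist_eq]
        exact max_le (mem_closedBall.1 hx) (mem_closedBall.1 (sphere_subset_closedBall hz)))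
    have hzr : ∀ z ∈ sphere p.2 r, ‖z - p.2‖ = r := fun z hz => by
      simpa [Complex.dist_eq] using mem_sphere.1 hz
    have hz1 : ∀ z ∈ sphere p.2 r, r / 2 ≤ ‖z - y1‖ := by
      intro z hz
      have : ‖z - p.2‖ - ‖h‖ ≤ ‖z - y1‖ := by
        have := norm_sub_norm_le (z - p.2) h
        simpa [hy1def, sub_sub] using this
      rw [hzr z hz] at this
      linarith
    have hz1' : ∀ z ∈ sphere p.2 r, z - y1 ≠ 0 := fun z hz => by
      intro h0
      have := hz1 z hz
      rw [h0] at this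
      simp at this
      linarith
    have hz0' : ∀ z ∈ sphere p.2 r, z - p.2 ≠ 0 := fun z hz => by
      intro h0
      have := hzr z hz
      rw [h0] at this
      simp at this
      linarith
    have hcS : ContinuousOn (fun z => g (x, z)) (sphere p.2 r) :=
      ((hsliceY x hx).continuousOn).mono sphere_subset_closedBall
    have hcont1 : ContinuousOn (fun z : ℂ => (z - y1)⁻¹ * g (x, z)) (sphere p.2 r) :=
      (((continuous_id.sub continuous_const).continuousOn).inv₀ hz1').mul hcS
    have hcont0 : ContinuousOn (fun z : ℂ => (z - p.2)⁻¹ * g (x, z)) (sphere p.2 r) :=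
      (((continuous_id.sub continuous_const).continuousOn).inv₀ hz0').mul hcS
    have hcont2 : ContinuousOn (fun z : ℂ => ((z - p.2) ^ 2)⁻¹ * g (x, z)) (sphere p.2 r) :=
      ((((continuous_id.sub continuous_const).pow 2).continuousOn).inv₀
        (fun z hz => pow_ne_zero 2 (hz0' z hz))).mul hcS
    have c1 : CircleIntegrable (fun z : ℂ => (z - y1)⁻¹ * g (x, z)) p.2 r :=
      hcont1.circleIntegrable hr0.le
    have c0 : CircleIntegrable (fun z : ℂ => (z - p.2)⁻¹ * g (x, z)) p.2 r :=
      hcont0.circleIntegrable hr0.le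
    have c2 : CircleIntegrable (fun z : ℂ => ((z - p.2) ^ 2)⁻¹ * g (x, z)) p.2 r :=
      hcont2.circleIntegrable hr0.le
    have cG : CircleIntegrable
        (fun z : ℂ => h⁻¹ * ((z - y1)⁻¹ * g (x, z)) - h⁻¹ * ((z - p.2)⁻¹ * g (x, z))) p.2 r :=
      (((continuousOn_const.mul hcont1).sub (continuousOn_const.mul hcont0))).circleIntegrable
        hr0.le
    have c1' : CircleIntegrable (fun z : ℂ => h⁻¹ * ((z - y1)⁻¹ * g (x, z))) p.2 r :=
      (continuousOn_const.mul hcont1).circleIntegrable hr0.le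
    have c0' : CircleIntegrable (fun z : ℂ => h⁻¹ * ((z - p.2)⁻¹ * g (x, z))) p.2 r :=
      (continuousOn_const.mul hcont0).circleIntegrable hr0.le
    have hsplit : (∮ z in C(p.2, r), (h / ((z - y1) * (z - p.2) ^ 2)) * g (x, z))
        = h⁻¹ * (∮ z in C(p.2, r), (z - y1)⁻¹ • g (x, z))
          - h⁻¹ * (∮ z in C(p.2, r), (z - p.2)⁻¹ • g (x, z))
          - ∮ z in C(p.2, r), ((z - p.2) ^ 2)⁻¹ • g (x, z) := by
      have step1 : (∮ z in C(p.2, r), (h / ((z - y1) * (z - p.2) ^ 2)) * g (x, z))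
          = ∮ z in C(p.2, r),
              ((h⁻¹ * ((z - y1)⁻¹ * g (x, z)) - h⁻¹ * ((z - p.2)⁻¹ * g (x, z)))
                - ((z - p.2) ^ 2)⁻¹ * g (x, z)) := by
        refine circleIntegral.integral_congr hr0.le (fun z hz => ?_)
        have h1 := hz1' z hz
        have h0 := hz0' z hz
        field_simp
        ring
      rw [step1, circleIntegral.integral_sub cG c2, circleIntegral.integral_sub c1' c0']
      have e1 : (∮ z in C(p.2, r), h⁻¹ * ((z - y1)⁻¹ * g (x, z)))
          = h⁻¹ * ∮ z in C(p.2, r), (z - y1)⁻¹ • g (x, z) := by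
        simp only [← smul_eq_mul]
        exact circleIntegral.integral_smul h⁻¹ _ _ _
      have e0 : (∮ z in C(p.2, r), h⁻¹ * ((z - p.2)⁻¹ * g (x, z)))
          = h⁻¹ * ∮ z in C(p.2, r), (z - p.2)⁻¹ • g (x, z) := by
        simp only [← smul_eq_mul]
        exact circleIntegral.integral_smul h⁻¹ _ _ _
      have e2 : (∮ z in C(p.2, r), ((z - p.2) ^ 2)⁻¹ * g (x, z))
          = ∮ z in C(p.2, r), ((z - p.2) ^ 2)⁻¹ • g (x, z) := by
        simp only [smul_eq_mul]
      rw [e1, e0, e2]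
    have hQrep : Q h x - pdy g (x, p.2)
        = (2 * Real.pi * Complex.I : ℂ)⁻¹
            • ∮ z in C(p.2, r), (h / ((z - y1) * (z - p.2) ^ 2)) * g (x, z) := by
      rw [hsplit, hval x hx y1 hy1, hval x hx p.2 (mem_ball_self hr0), ← hder x hx]
      have hT : (2 * Real.pi * Complex.I : ℂ) ≠ 0 := by
        simp [Real.pi_ne_zero, Complex.I_ne_zero]
      simp only [smul_eq_mul, hQdef]
      field_simp
      rw [hy1def]
      ring
    have hbound : ∀ z ∈ sphere p.2 r,
        ‖(h / ((z - y1) * (z - p.2) ^ 2)) * g (x, z)‖ ≤ ‖h‖ * (2 * M) / r ^ 3 := by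
      intro z hz
      have hA := hz1 z hz
      have hB := hzr z hz
      have hG := hgxM z hz
      have hr2 : (0:ℝ) < r / 2 := by linarith
      calc ‖(h / ((z - y1) * (z - p.2) ^ 2)) * g (x, z)‖
          = ‖h‖ / (‖z - y1‖ * r ^ 2) * ‖g (x, z)‖ := by
            simp [norm_mul, map_div₀, map_mul, map_pow, hB]
        _ ≤ ‖h‖ / ((r / 2) * r ^ 2) * M := by
            gcongr
        _ = ‖h‖ * (2 * M) / r ^ 3 := by
            field_simp
    have hIb : ‖∮ z in C(p.2, r), (h / ((z - y1) * (z - p.2) ^ 2)) * g (x, z)‖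
        ≤ 2 * Real.pi * r * (‖h‖ * (2 * M) / r ^ 3) :=
      circleIntegral.norm_integral_le_of_norm_le_const hr0.le hbound
    rw [hQrep]
    rw [norm_smul]
    have hnT : ‖(2 * Real.pi * Complex.I : ℂ)⁻¹‖ = (2 * Real.pi)⁻¹ := by
      simp [norm_inv, map_mul, Complex.norm_I, Complex.norm_two,
        abs_of_pos Real.pi_pos]
    rw [hnT]
    calc (2 * Real.pi)⁻¹ * ‖∮ z in C(p.2, r), (h / ((z - y1) * (z - p.2) ^ 2)) * g (x, z)‖
        ≤ (2 * Real.pi)⁻¹ * (2 * Real.pi * r * (‖h‖ * (2 * M) / r ^ 3)) := by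
          gcongr
      _ = ‖h‖ * (2 * M) / r ^ 2 := by
          field_simp [Real.pi_ne_zero]
  -- uniform convergence of difference quotients
  haveI : (nhdsWithin (0:ℂ) {0}ᶜ).NeBot := Module.punctured_nhds_neBot ℂ ℂ 0
  have hTU : TendstoUniformlyOn Q (fun x => pdy g (x, p.2)) (nhdsWithin (0:ℂ) {0}ᶜ)
      (closedBall p.1 r) := by
    rw [Metric.tendstoUniformlyOn_iff]
    intro ε hε
    have hcont : Tendsto (fun h : ℂ => ‖h‖ * (2 * M) / r ^ 2) (nhds 0) (nhds 0) := by
      have hc : Continuous (fun h : ℂ => ‖h‖ * (2 * M) / r ^ 2) := by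
        exact (continuous_norm.mul continuous_const).div_const _
      simpa using hc.tendsto 0
    have h1 : ∀ᶠ h in nhds (0:ℂ), ‖h‖ * (2 * M) / r ^ 2 < ε :=
      hcont.eventually_lt_const hε
    have h2 : ∀ᶠ h in nhds (0:ℂ), ‖h‖ ≤ r / 2 := by
      have : Tendsto (fun h : ℂ => ‖h‖) (nhds 0) (nhds 0) := by
        simpa using continuous_norm.tendsto (0:ℂ)
      exact this.eventually_le_const (by linarith)
    filter_upwards [h1.filter_mono nhdsWithin_le_nhds, h2.filter_mono nhdsWithin_le_nhds,
      self_mem_nhdsWithin] with h hh1 hh2 hh3 x hx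
    rw [dist_comm, dist_eq_norm]
    exact lt_of_le_of_lt (hest h hh3 hh2 x hx) hh1
  have habsr : ∀ᶠ h in nhdsWithin (0:ℂ) {0}ᶜ, ‖h‖ ≤ r := by
    have : Tendsto (fun h : ℂ => ‖h‖) (nhds 0) (nhds 0) := by
      simpa using continuous_norm.tendsto (0:ℂ)
    exact (this.eventually_le_const hr0).filter_mono nhdsWithin_le_nhds
  have hy1cb : ∀ h : ℂ, ‖h‖ ≤ r → p.2 + h ∈ closedBall p.2 r := by
    intro h hh
    simp only [Metric.mem_closedBall, dist_eq_norm, add_sub_cancel_left]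
    exact hh
  have hQdiff : ∀ᶠ h in nhdsWithin (0:ℂ) {0}ᶜ, DifferentiableOn ℂ (Q h) (ball p.1 r) := by
    filter_upwards [habsr] with h hh
    have d1 : DifferentiableOn ℂ (fun x => g (x, p.2 + h)) (ball p.1 r) :=
      hg.comp ((differentiable_id.prodMk (differentiable_const _)).differentiableOn)
        (fun x hx => hmem x (ball_subset_closedBall hx) _ (hy1cb h hh))
    have d0 : DifferentiableOn ℂ (fun x => g (x, p.2)) (ball p.1 r) :=
      hg.comp ((differentiable_id.prodMk (differentiable_const _)).differentiableOn)
        (fun x hx => hmem x (ball_subset_closedBall hx) _ hy0)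
    exact (d1.sub d0).div_const h
  have hTLU : TendstoLocallyUniformlyOn Q (fun x => pdy g (x, p.2))
      (nhdsWithin (0:ℂ) {0}ᶜ) (ball p.1 r) :=
    (hTU.mono ball_subset_closedBall).tendstoLocallyUniformlyOn
  have hlimdiff : DifferentiableOn ℂ (fun x => pdy g (x, p.2)) (ball p.1 r) :=
    hTLU.differentiableOn hQdiff isOpen_ball
  have part1 : DifferentiableAt ℂ (fun t => pdy g (t, p.2)) p.1 :=
    (hlimdiff.differentiableAt (isOpen_ball.mem_nhds (mem_ball_self hr0)))
  refine ⟨part1, ?_⟩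
  have hderivTLU := hTLU.deriv hQdiff isOpen_ball
  have htends : Tendsto (fun h => deriv (Q h) p.1) (nhdsWithin (0:ℂ) {0}ᶜ)
      (nhds (pdx (pdy g) p)) :=
    hderivTLU.tendsto_at (mem_ball_self hr0)
  have hQderiv : ∀ᶠ h in nhdsWithin (0:ℂ) {0}ᶜ,
      deriv (Q h) p.1 = h⁻¹ • (pdx g (p.1, p.2 + h) - pdx g (p.1, p.2)) := by
    filter_upwards [habsr] with h hh
    have d1 : DifferentiableAt ℂ (fun x => g (x, p.2 + h)) p.1 :=
      diffX (hg.differentiableAt (hΩ.mem_nhds (hmem p.1 hx0 _ (hy1cb h hh))))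
    have d0 : DifferentiableAt ℂ (fun x => g (x, p.2)) p.1 :=
      diffX (hg.differentiableAt (hΩ.mem_nhds (hmem p.1 hx0 _ hy0)))
    have : Q h = fun x => (g (x, p.2 + h) - g (x, p.2)) / h := rfl
    rw [this]
    rw [deriv_div_const, deriv_fun_sub d1 d0]
    rw [smul_eq_mul, div_eq_inv_mul]
    rfl
  have htends2 : Tendsto (fun h : ℂ => h⁻¹ • (pdx g (p.1, p.2 + h) - pdx g (p.1, p.2)))
      (nhdsWithin (0:ℂ) {0}ᶜ) (nhds (pdx (pdy g) p)) :=
    htends.congr' hQderiv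
  exact hasDerivAt_iff_tendsto_slope_zero.2 htends2

theorem normal_form_of_hyperbolic_operator
    (Ω : Set (ℂ × ℂ)) (hΩ : IsOpen Ω) (hne : Ω.Nonempty)
    (a b c f : ℂ × ℂ → ℂ)
    (ha : DifferentiableOn ℂ a Ω) (hb : DifferentiableOn ℂ b Ω)
    (hc : DifferentiableOn ℂ c Ω) (hf : DifferentiableOn ℂ f Ω)
    (hf0 : ∀ p ∈ Ω, f p ≠ 0)
    (hfb : ∀ p ∈ Ω, pdx f p / f p = - b p)
    (a' c' h k : ℂ × ℂ → ℂ)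
    (ha' : a' = fun p => a p + pdy f p / f p)
    (hc' : c' = fun p => c p + a p * (pdx f p / f p) + b p * (pdy f p / f p)
        + pdx (pdy f) p / f p)
    (hh : h = fun p => pdx a p + a p * b p - c p)
    (hk : k = fun p => pdy b p + a p * b p - c p) :
    (∀ u : ℂ × ℂ → ℂ, DifferentiableOn ℂ u Ω → ∀ p ∈ Ω,
      (1 / f p) * (pdx (pdy (fun q => f q * u q)) p
        + a p * pdx (fun q => f q * u q) p
        + b p * pdy (fun q => f q * u q) p
        + c p * (f p * u p))
      = pdx (pdy u) p + a' p * pdx u p + c' p * u p) ∧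
    (∀ p ∈ Ω, pdx a' p = h p - k p) ∧
    (∀ p ∈ Ω, c' p = - k p) := by
  have hfbmul : ∀ q ∈ Ω, pdx f q = -(b q * f q) := by
    intro q hq
    have h1 := (div_eq_iff (hf0 q hq)).1 (hfb q hq)
    rwa [neg_mul] at h1
  -- the mixed partial of f, computed via the relation pdx f = -(b f)
  have hAval : ∀ p ∈ Ω, pdx (pdy f) p = -(pdy b p * f p + b p * pdy f p) := by
    intro p hp
    have hopen := hΩ.mem_nhds hp
    obtain ⟨_, hdxf_hasY⟩ := mixed hΩ hf hp
    have hbA := hb.differentiableAt hopen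
    have hfA := hf.differentiableAt hopen
    have h1 : pdy (pdx f) p = pdx (pdy f) p := hdxf_hasY.deriv
    have h2 : pdx f =ᶠ[nhds p] (fun q => -(b q * f q)) :=
      Filter.eventuallyEq_of_mem hopen (fun q hq => hfbmul q hq)
    have h3 : pdy (pdx f) p = pdy (fun q => -(b q * f q)) p := pdy_congr_nhds h2
    have h4 : pdy (fun q => -(b q * f q)) p = -(pdy (fun q => b q * f q) p) := pdy_neg
    have h5 : pdy (fun q => b q * f q) p = pdy b p * f p + b p * pdy f p :=
      pdy_mul (diffY hbA) (diffY hfA)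
    rw [← h1, h3, h4, h5]
  refine ⟨?_, ?_, ?_⟩
  · -- part (i)
    intro u hu p hp
    have hopen := hΩ.mem_nhds hp
    have hfA := hf.differentiableAt hopen
    have huA := hu.differentiableAt hopen
    have haA := ha.differentiableAt hopen
    obtain ⟨hdyf_sliceX, _⟩ := mixed hΩ hf hp
    obtain ⟨hdyu_sliceX, _⟩ := mixed hΩ hu hp
    have hprod : ∀ q ∈ Ω, pdy (fun q' => f q' * u q') q = pdy f q * u q + f q * pdy u q :=
      fun q hq => pdy_mul (diffY (hf.differentiableAt (hΩ.mem_nhds hq)))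
        (diffY (hu.differentiableAt (hΩ.mem_nhds hq)))
    have hcong : pdy (fun q' => f q' * u q') =ᶠ[nhds p]
        (fun q => pdy f q * u q + f q * pdy u q) :=
      Filter.eventuallyEq_of_mem hopen (fun q hq => hprod q hq)
    have E1 : pdx (pdy (fun q => f q * u q)) p
        = pdx (fun q => pdy f q * u q + f q * pdy u q) p := pdx_congr_nhds hcong
    have E2 : pdx (fun q => pdy f q * u q + f q * pdy u q) p
        = (pdx (pdy f) p * u p + pdy f p * pdx u p)
          + (pdx f p * pdy u p + f p * pdx (pdy u) p) := by
      have s1 : DifferentiableAt ℂ (fun t => pdy f (t, p.2) * u (t, p.2)) p.1 :=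
        hdyf_sliceX.mul (diffX huA)
      have s2 : DifferentiableAt ℂ (fun t => f (t, p.2) * pdy u (t, p.2)) p.1 :=
        (diffX hfA).mul hdyu_sliceX
      rw [pdx_add s1 s2, pdx_mul hdyf_sliceX (diffX huA), pdx_mul (diffX hfA) hdyu_sliceX]
    have E3 : pdx (fun q => f q * u q) p = pdx f p * u p + f p * pdx u p :=
      pdx_mul (diffX hfA) (diffX huA)
    have E4 : pdy (fun q => f q * u q) p = pdy f p * u p + f p * pdy u p := hprod p hp
    simp only [ha', hc']
    rw [E1, E2, E3, E4, hfbmul p hp]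
    field_simp [hf0 p hp]
    ring
  · -- part (ii) first identity
    intro p hp
    have hopen := hΩ.mem_nhds hp
    have hfA := hf.differentiableAt hopen
    have haA := ha.differentiableAt hopen
    obtain ⟨hdyf_sliceX, _⟩ := mixed hΩ hf hp
    simp only [ha', hh, hk]
    have e1 : pdx (fun q => a q + pdy f q / f q) p
        = pdx a p + pdx (fun q => pdy f q / f q) p :=
      pdx_add (diffX haA) (hdyf_sliceX.div (diffX hfA) (hf0 p hp))
    have e2 : pdx (fun q => pdy f q / f q) p
        = (pdx (pdy f) p * f p - pdy f p * pdx f p) / f p ^ 2 :=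
      pdx_div hdyf_sliceX (diffX hfA) (hf0 p hp)
    rw [e1, e2, hAval p hp, hfbmul p hp]
    field_simp [hf0 p hp]
    ring
  · -- part (ii) second identity
    intro p hp
    simp only [hc', hk]
    rw [hfb p hp, hAval p hp]
    field_simp [hf0 p hp]
    ring
end

section
/- Let Ω ⊆ ℂ² be a nonempty open set, let a, b, c be holomorphic on Ω, and suppose the invariant k = ∂y b + a·b − c is nowhere vanishing on Ω. Define a₋ = a, b₋ = b − (∂x k)/k, c₋ = c + ∂x a − ∂y b − a·(∂x k)/k. Then: (i) if u is holomorphic on Ω with ∂x∂y u + a·∂x u + b·∂y u + c·u = 0, then u₋ := ∂x u + b·u satisfies ∂x∂y u₋ + a₋·∂x u₋ + b₋·∂y u₋ + c₋·u₋ = 0; and (ii) the invariants h₋ = ∂x a₋ + a₋·b₋ − c₋ and k₋ = ∂y b₋ + a₋·b₋ − c₋ satisfy h₋ = k and k₋ = 2k − h − ∂x((∂y k)/k), where h = ∂x a + a·b − c. -/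
open MeasureTheory Metric Complex Set Filter intervalIntegral
open scoped Topology Real

namespace LaplaceAux


lemma sliceX {f : ℂ × ℂ → ℂ} {p : ℂ × ℂ} (hf : DifferentiableAt ℂ f p) :
    DifferentiableAt ℂ (fun t => f (t, p.2)) p.1 := by
  have h : DifferentiableAt ℂ (fun t : ℂ => (t, p.2)) p.1 :=
    differentiableAt_id.prodMk (differentiableAt_const _)
  exact hf.comp p.1 h

lemma sliceY {f : ℂ × ℂ → ℂ} {p : ℂ × ℂ} (hf : DifferentiableAt ℂ f p) :
    DifferentiableAt ℂ (fun t => f (p.1, t)) p.2 := by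
  have h : DifferentiableAt ℂ (fun t : ℂ => (p.1, t)) p.2 :=
    (differentiableAt_const _).prodMk differentiableAt_id
  exact hf.comp p.2 h

lemma pdx_add {f g : ℂ × ℂ → ℂ} {p : ℂ × ℂ} (hf : DifferentiableAt ℂ f p)
    (hg : DifferentiableAt ℂ g p) :
    pdx (fun q => f q + g q) p = pdx f p + pdx g p :=
  deriv_add (sliceX hf) (sliceX hg)

lemma pdx_sub {f g : ℂ × ℂ → ℂ} {p : ℂ × ℂ} (hf : DifferentiableAt ℂ f p)
    (hg : DifferentiableAt ℂ g p) :
    pdx (fun q => f q - g q) p = pdx f p - pdx g p :=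
  deriv_sub (sliceX hf) (sliceX hg)

lemma pdx_mul {f g : ℂ × ℂ → ℂ} {p : ℂ × ℂ} (hf : DifferentiableAt ℂ f p)
    (hg : DifferentiableAt ℂ g p) :
    pdx (fun q => f q * g q) p = pdx f p * g p + f p * pdx g p := by
  have := deriv_fun_mul (sliceX hf) (sliceX hg)
  simpa [pdx] using this

lemma pdx_div {f g : ℂ × ℂ → ℂ} {p : ℂ × ℂ} (hf : DifferentiableAt ℂ f p)
    (hg : DifferentiableAt ℂ g p) (hg0 : g p ≠ 0) :
    pdx (fun q => f q / g q) p = (pdx f p * g p - f p * pdx g p) / (g p) ^ 2 := by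
  have hg0' : g (p.1, p.2) ≠ 0 := by simpa using hg0
  have := deriv_fun_div (sliceX hf) (sliceX hg) hg0'
  simpa [pdx] using this

lemma pdx_const_mul {f : ℂ × ℂ → ℂ} {p : ℂ × ℂ} (c : ℂ) (hf : DifferentiableAt ℂ f p) :
    pdx (fun q => c * f q) p = c * pdx f p := by
  simpa [pdx] using deriv_const_mul c (sliceX hf)

lemma pdy_add {f g : ℂ × ℂ → ℂ} {p : ℂ × ℂ} (hf : DifferentiableAt ℂ f p)
    (hg : DifferentiableAt ℂ g p) :
    pdy (fun q => f q + g q) p = pdy f p + pdy g p :=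
  deriv_add (sliceY hf) (sliceY hg)

lemma pdy_sub {f g : ℂ × ℂ → ℂ} {p : ℂ × ℂ} (hf : DifferentiableAt ℂ f p)
    (hg : DifferentiableAt ℂ g p) :
    pdy (fun q => f q - g q) p = pdy f p - pdy g p :=
  deriv_sub (sliceY hf) (sliceY hg)

lemma pdy_mul {f g : ℂ × ℂ → ℂ} {p : ℂ × ℂ} (hf : DifferentiableAt ℂ f p)
    (hg : DifferentiableAt ℂ g p) :
    pdy (fun q => f q * g q) p = pdy f p * g p + f p * pdy g p := by
  have := deriv_fun_mul (sliceY hf) (sliceY hg)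
  simpa [pdy] using this

lemma pdy_div {f g : ℂ × ℂ → ℂ} {p : ℂ × ℂ} (hf : DifferentiableAt ℂ f p)
    (hg : DifferentiableAt ℂ g p) (hg0 : g p ≠ 0) :
    pdy (fun q => f q / g q) p = (pdy f p * g p - f p * pdy g p) / (g p) ^ 2 := by
  have hg0' : g (p.1, p.2) ≠ 0 := by simpa using hg0
  have := deriv_fun_div (sliceY hf) (sliceY hg) hg0'
  simpa [pdy] using this

lemma pdx_congr {f g : ℂ × ℂ → ℂ} {p : ℂ × ℂ} (h : f =ᶠ[𝓝 p] g) :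
    pdx f p = pdx g p := by
  have ht : Filter.Tendsto (fun t : ℂ => (t, p.2)) (𝓝 p.1) (𝓝 p) := by
    have := (Continuous.prodMk continuous_id (continuous_const (y := p.2))).tendsto p.1
    simpa using this
  exact Filter.EventuallyEq.deriv_eq (h.comp_tendsto ht)

lemma pdy_congr {f g : ℂ × ℂ → ℂ} {p : ℂ × ℂ} (h : f =ᶠ[𝓝 p] g) :
    pdy f p = pdy g p := by
  have ht : Filter.Tendsto (fun t : ℂ => (p.1, t)) (𝓝 p.2) (𝓝 p) := by
    have := (Continuous.prodMk (continuous_const (y := p.1)) continuous_id).tendsto p.2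
    simpa using this
  exact Filter.EventuallyEq.deriv_eq (h.comp_tendsto ht)

lemma pdx_congr_of_isOpen {f g : ℂ × ℂ → ℂ} {U : Set (ℂ × ℂ)} (hU : IsOpen U)
    (h : ∀ q ∈ U, f q = g q) {p : ℂ × ℂ} (hp : p ∈ U) : pdx f p = pdx g p :=
  pdx_congr (Filter.eventually_iff_exists_mem.2 ⟨U, hU.mem_nhds hp, h⟩)

lemma pdy_congr_of_isOpen {f g : ℂ × ℂ → ℂ} {U : Set (ℂ × ℂ)} (hU : IsOpen U)
    (h : ∀ q ∈ U, f q = g q) {p : ℂ × ℂ} (hp : p ∈ U) : pdy f p = pdy g p :=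
  pdy_congr (Filter.eventually_iff_exists_mem.2 ⟨U, hU.mem_nhds hp, h⟩)


lemma pdy_const_mul {f : ℂ × ℂ → ℂ} {p : ℂ × ℂ} (c : ℂ) (hf : DifferentiableAt ℂ f p) :
    pdy (fun q => c * f q) p = c * pdy f p := by
  simpa [pdy] using deriv_const_mul c (sliceY hf)



noncomputable def μ2 : Measure (ℝ × ℝ) :=
  (volume.restrict (Set.Ioc 0 (2*π))).prod (volume.restrict (Set.Ioc 0 (2*π)))

instance : IsFiniteMeasure (volume.restrict (Set.Ioc (0:ℝ) (2*π))) :=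
  ⟨by simp [Real.volume_Ioc]; exact ENNReal.mul_lt_top (by simp) ENNReal.ofReal_lt_top⟩

instance : IsFiniteMeasure μ2 := by
  unfold μ2; infer_instance

noncomputable def Wf (f : ℂ × ℂ → ℂ) (x0 y0 : ℂ) (R : ℝ) : ℝ × ℝ → ℂ := fun a =>
  (circleMap 0 R a.1 * I) * ((circleMap 0 R a.2 * I) *
    f (circleMap x0 R a.1, circleMap y0 R a.2))

noncomputable def KK (x0 y0 : ℂ) (R : ℝ) (m n : ℕ) (q : ℂ × ℂ) (a : ℝ × ℝ) : ℂ :=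
  (circleMap x0 R a.1 - q.1) ^ (-(m:ℤ)) * (circleMap y0 R a.2 - q.2) ^ (-(n:ℤ))

noncomputable def cInt (f : ℂ × ℂ → ℂ) (x0 y0 : ℂ) (R : ℝ) (m n : ℕ) (q : ℂ × ℂ) : ℂ :=
  ∫ a, Wf f x0 y0 R a * KK x0 y0 R m n q a ∂μ2

lemma integrable_of_bounded {E : Type*} [NormedAddCommGroup E] {g : ℝ × ℝ → E} (hg : AEStronglyMeasurable g μ2) (C : ℝ)
    (h : ∀ a, ‖g a‖ ≤ C) : Integrable g μ2 :=
  (integrable_const C).mono' hg (Filter.Eventually.of_forall fun a => h a)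

lemma circle_sub_norm {x0 : ℂ} {R : ℝ} (hR : 0 < R) (θ : ℝ) {w : ℂ} (hw : dist w x0 < R) :
    R - dist w x0 ≤ ‖circleMap x0 R θ - w‖ := by
  have h1 : dist (circleMap x0 R θ) x0 = R := by
    have := circleMap_mem_sphere x0 hR.le θ
    rwa [Metric.mem_sphere] at this
  have h2 : dist (circleMap x0 R θ) x0 ≤ dist (circleMap x0 R θ) w + dist w x0 :=
    dist_triangle _ _ _
  have : dist (circleMap x0 R θ) w = ‖circleMap x0 R θ - w‖ := by
    rw [dist_eq_norm]
  linarith [h2, h1.symm ▸ h2]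

lemma circle_sub_ne {x0 : ℂ} {R : ℝ} (hR : 0 < R) (θ : ℝ) {w : ℂ} (hw : dist w x0 < R) :
    circleMap x0 R θ - w ≠ 0 := by
  have := circle_sub_norm hR θ hw
  intro h
  rw [h, norm_zero] at this
  linarith

lemma norm_zpow_neg_le {z : ℂ} {c : ℝ} (hc : 0 < c) (h : c ≤ ‖z‖) (m : ℕ) :
    ‖z ^ (-(m:ℤ))‖ ≤ (c ^ m)⁻¹ := by
  rw [norm_zpow, zpow_neg, zpow_natCast]
  exact inv_anti₀ (pow_pos hc m) (pow_le_pow_left₀ hc.le h m)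

lemma hasDerivAt_sub_zpow {s w : ℂ} (hsw : s - w ≠ 0) (m : ℕ) :
    HasDerivAt (fun x : ℂ => (s - x) ^ (-(m:ℤ))) ((m:ℂ) * (s - w) ^ (-(m:ℤ) - 1)) w := by
  have h1 : HasDerivAt (fun x : ℂ => s - x) (-1) w := (hasDerivAt_id w).const_sub s
  have h2 := hasDerivAt_zpow (-(m:ℤ)) (s - w) (Or.inl hsw)
  have h3 := h2.comp w h1
  refine h3.congr_deriv ?_
  push_cast
  ring

section Cont

variable {f : ℂ × ℂ → ℂ} {x0 y0 : ℂ} {R : ℝ}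

lemma Wf_continuous (hR : 0 < R)
    (hcont : ContinuousOn f (sphere x0 R ×ˢ sphere y0 R)) :
    Continuous (Wf f x0 y0 R) := by
  have hmap : Continuous fun a : ℝ × ℝ => (circleMap x0 R a.1, circleMap y0 R a.2) :=
    ((continuous_circleMap x0 R).comp continuous_fst).prodMk
      ((continuous_circleMap y0 R).comp continuous_snd)
  have hf : Continuous fun a : ℝ × ℝ => f (circleMap x0 R a.1, circleMap y0 R a.2) := by
    apply hcont.comp_continuous hmap
    intro a
    exact ⟨circleMap_mem_sphere x0 hR.le a.1, circleMap_mem_sphere y0 hR.le a.2⟩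
  exact (((continuous_circleMap 0 R).comp continuous_fst).mul continuous_const).mul
    ((((continuous_circleMap 0 R).comp continuous_snd).mul continuous_const).mul hf)

lemma Wf_bound (hR : 0 < R)
    (hcont : ContinuousOn f (sphere x0 R ×ˢ sphere y0 R)) :
    ∃ M : ℝ, 0 ≤ M ∧ ∀ a : ℝ × ℝ, ‖Wf f x0 y0 R a‖ ≤ M := by
  obtain ⟨C, hC⟩ :=
    ((isCompact_sphere x0 R).prod (isCompact_sphere y0 R)).exists_bound_of_continuousOn hcont
  refine ⟨R * R * max C 0, by positivity, fun a => ?_⟩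
  have h1 : ‖f (circleMap x0 R a.1, circleMap y0 R a.2)‖ ≤ max C 0 :=
    le_trans (hC _ ⟨circleMap_mem_sphere x0 hR.le a.1, circleMap_mem_sphere y0 hR.le a.2⟩)
      (le_max_left _ _)
  have h2 : ‖circleMap 0 R a.1 * I‖ = R := by
    simp [norm_mul, norm_circleMap_zero, abs_of_pos hR]
  have h3 : ‖circleMap 0 R a.2 * I‖ = R := by
    simp [norm_mul, norm_circleMap_zero, abs_of_pos hR]
  calc ‖Wf f x0 y0 R a‖
      = ‖circleMap 0 R a.1 * I‖ * (‖circleMap 0 R a.2 * I‖ *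
        ‖f (circleMap x0 R a.1, circleMap y0 R a.2)‖) := by
        simp [Wf, norm_mul, mul_assoc]
    _ ≤ R * (R * max C 0) := by rw [h2, h3]; gcongr
    _ = R * R * max C 0 := by ring

lemma KK_continuous (hR : 0 < R) (m n : ℕ) {q : ℂ × ℂ}
    (h1 : dist q.1 x0 < R) (h2 : dist q.2 y0 < R) :
    Continuous (fun a => KK x0 y0 R m n q a) := by
  have c1 : Continuous fun a : ℝ × ℝ => circleMap x0 R a.1 - q.1 :=
    ((continuous_circleMap x0 R).comp continuous_fst).sub continuous_const
  have c2 : Continuous fun a : ℝ × ℝ => circleMap y0 R a.2 - q.2 :=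
    ((continuous_circleMap y0 R).comp continuous_snd).sub continuous_const
  exact (c1.zpow₀ _ fun a => Or.inl (circle_sub_ne hR a.1 h1)).mul
    (c2.zpow₀ _ fun a => Or.inl (circle_sub_ne hR a.2 h2))

lemma KK_bound (hR : 0 < R) (m n : ℕ) {q : ℂ × ℂ} {c : ℝ} (hc : 0 < c)
    (h1 : c ≤ R - dist q.1 x0) (h2 : c ≤ R - dist q.2 y0) (a : ℝ × ℝ) :
    ‖KK x0 y0 R m n q a‖ ≤ (c ^ m)⁻¹ * (c ^ n)⁻¹ := by
  have d1 : dist q.1 x0 < R := by linarith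
  have d2 : dist q.2 y0 < R := by linarith
  have e1 : c ≤ ‖circleMap x0 R a.1 - q.1‖ := le_trans (by linarith) (circle_sub_norm hR a.1 d1)
  have e2 : c ≤ ‖circleMap y0 R a.2 - q.2‖ := le_trans (by linarith) (circle_sub_norm hR a.2 d2)
  rw [KK, norm_mul]
  exact mul_le_mul (norm_zpow_neg_le hc e1 m) (norm_zpow_neg_le hc e2 n) (norm_nonneg _)
    (by positivity)

lemma WK_integrable (hR : 0 < R)
    (hcont : ContinuousOn f (sphere x0 R ×ˢ sphere y0 R)) (m n : ℕ) {q : ℂ × ℂ}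
    (h1 : dist q.1 x0 < R) (h2 : dist q.2 y0 < R) :
    Integrable (fun a => Wf f x0 y0 R a * KK x0 y0 R m n q a) μ2 := by
  obtain ⟨M, hM0, hM⟩ := Wf_bound hR hcont
  set c := min (R - dist q.1 x0) (R - dist q.2 y0) with hc
  have hcpos : 0 < c := lt_min (by linarith) (by linarith)
  apply integrable_of_bounded
    (((Wf_continuous hR hcont).mul (KK_continuous hR m n h1 h2)).aestronglyMeasurable)
    (M * ((c ^ m)⁻¹ * (c ^ n)⁻¹))
  intro a
  rw [Pi.mul_apply, norm_mul]
  exact mul_le_mul (hM a) (KK_bound hR m n hcpos (min_le_left _ _) (min_le_right _ _) a)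
    (norm_nonneg _) hM0

end Cont

section Deriv

variable {f : ℂ × ℂ → ℂ} {x0 y0 : ℂ} {R : ℝ}

/-- derivative (in `q`) of the kernel -/
noncomputable def DK (x0 y0 : ℂ) (R : ℝ) (m n : ℕ) (q : ℂ × ℂ) (a : ℝ × ℝ) :
    ℂ × ℂ →L[ℂ] ℂ :=
  ((circleMap x0 R a.1 - q.1) ^ (-(m:ℤ))) •
      (((n:ℂ) * (circleMap y0 R a.2 - q.2) ^ (-(n:ℤ) - 1)) • (ContinuousLinearMap.snd ℂ ℂ ℂ))
    + ((circleMap y0 R a.2 - q.2) ^ (-(n:ℤ))) •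
      (((m:ℂ) * (circleMap x0 R a.1 - q.1) ^ (-(m:ℤ) - 1)) • (ContinuousLinearMap.fst ℂ ℂ ℂ))

lemma hasFDerivAt_KK (m n : ℕ) {q : ℂ × ℂ} (a : ℝ × ℝ)
    (h1 : circleMap x0 R a.1 - q.1 ≠ 0) (h2 : circleMap y0 R a.2 - q.2 ≠ 0) :
    HasFDerivAt (fun q' => KK x0 y0 R m n q' a) (DK x0 y0 R m n q a) q := by
  have hc : HasFDerivAt (fun q' : ℂ × ℂ => (circleMap x0 R a.1 - q'.1) ^ (-(m:ℤ)))
      (((m:ℂ) * (circleMap x0 R a.1 - q.1) ^ (-(m:ℤ) - 1)) • (ContinuousLinearMap.fst ℂ ℂ ℂ)) q :=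
    (hasDerivAt_sub_zpow h1 m).comp_hasFDerivAt q (hasFDerivAt_fst)
  have hd : HasFDerivAt (fun q' : ℂ × ℂ => (circleMap y0 R a.2 - q'.2) ^ (-(n:ℤ)))
      (((n:ℂ) * (circleMap y0 R a.2 - q.2) ^ (-(n:ℤ) - 1)) • (ContinuousLinearMap.snd ℂ ℂ ℂ)) q :=
    (hasDerivAt_sub_zpow h2 n).comp_hasFDerivAt q (hasFDerivAt_snd)
  exact hc.mul hd

lemma norm_fst_le' : ‖ContinuousLinearMap.fst ℂ ℂ ℂ‖ ≤ 1 :=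
  ContinuousLinearMap.opNorm_le_bound _ zero_le_one fun v => by
    simpa using norm_fst_le v

lemma norm_snd_le' : ‖ContinuousLinearMap.snd ℂ ℂ ℂ‖ ≤ 1 :=
  ContinuousLinearMap.opNorm_le_bound _ zero_le_one fun v => by
    simpa using norm_snd_le v

lemma DK_norm_le (hR : 0 < R) (m n : ℕ) {q : ℂ × ℂ} {c : ℝ} (hc : 0 < c)
    (h1 : c ≤ R - dist q.1 x0) (h2 : c ≤ R - dist q.2 y0) (a : ℝ × ℝ) :
    ‖DK x0 y0 R m n q a‖ ≤
      (c ^ m)⁻¹ * ((n:ℝ) * (c ^ (n+1))⁻¹) + (c ^ n)⁻¹ * ((m:ℝ) * (c ^ (m+1))⁻¹) := by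
  have d1 : dist q.1 x0 < R := by linarith
  have d2 : dist q.2 y0 < R := by linarith
  have e1 : c ≤ ‖circleMap x0 R a.1 - q.1‖ := le_trans (by linarith) (circle_sub_norm hR a.1 d1)
  have e2 : c ≤ ‖circleMap y0 R a.2 - q.2‖ := le_trans (by linarith) (circle_sub_norm hR a.2 d2)
  have hm1 : ‖(circleMap x0 R a.1 - q.1) ^ (-(m:ℤ) - 1)‖ ≤ (c ^ (m+1))⁻¹ := by
    have h : -(m:ℤ) - 1 = -((m+1 : ℕ) : ℤ) := by push_cast; ring
    rw [h]
    exact norm_zpow_neg_le hc e1 (m+1)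
  have hm2 : ‖(circleMap y0 R a.2 - q.2) ^ (-(n:ℤ) - 1)‖ ≤ (c ^ (n+1))⁻¹ := by
    have h : -(n:ℤ) - 1 = -((n+1 : ℕ) : ℤ) := by push_cast; ring
    rw [h]
    exact norm_zpow_neg_le hc e2 (n+1)
  have s2 : ‖((n:ℂ) * (circleMap y0 R a.2 - q.2) ^ (-(n:ℤ) - 1)) •
      (ContinuousLinearMap.snd ℂ ℂ ℂ)‖ ≤ (n:ℝ) * (c ^ (n+1))⁻¹ := by
    refine le_trans (ContinuousLinearMap.opNorm_smul_le _ _) ?_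
    have hx : ‖(n:ℂ) * (circleMap y0 R a.2 - q.2) ^ (-(n:ℤ) - 1)‖ ≤ (n:ℝ) * (c ^ (n+1))⁻¹ := by
      rw [norm_mul]
      have : ‖(n:ℂ)‖ = (n:ℝ) := by simp
      rw [this]
      gcongr
    calc ‖(n:ℂ) * (circleMap y0 R a.2 - q.2) ^ (-(n:ℤ) - 1)‖ * ‖ContinuousLinearMap.snd ℂ ℂ ℂ‖
        ≤ ((n:ℝ) * (c ^ (n+1))⁻¹) * 1 :=
          mul_le_mul hx norm_snd_le' (norm_nonneg _) (by positivity)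
      _ = (n:ℝ) * (c ^ (n+1))⁻¹ := mul_one _
  have s1 : ‖((m:ℂ) * (circleMap x0 R a.1 - q.1) ^ (-(m:ℤ) - 1)) •
      (ContinuousLinearMap.fst ℂ ℂ ℂ)‖ ≤ (m:ℝ) * (c ^ (m+1))⁻¹ := by
    refine le_trans (ContinuousLinearMap.opNorm_smul_le _ _) ?_
    have hx : ‖(m:ℂ) * (circleMap x0 R a.1 - q.1) ^ (-(m:ℤ) - 1)‖ ≤ (m:ℝ) * (c ^ (m+1))⁻¹ := by
      rw [norm_mul]
      have : ‖(m:ℂ)‖ = (m:ℝ) := by simp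
      rw [this]
      gcongr
    calc ‖(m:ℂ) * (circleMap x0 R a.1 - q.1) ^ (-(m:ℤ) - 1)‖ * ‖ContinuousLinearMap.fst ℂ ℂ ℂ‖
        ≤ ((m:ℝ) * (c ^ (m+1))⁻¹) * 1 :=
          mul_le_mul hx norm_fst_le' (norm_nonneg _) (by positivity)
      _ = (m:ℝ) * (c ^ (m+1))⁻¹ := mul_one _
  have hA : ‖((circleMap x0 R a.1 - q.1) ^ (-(m:ℤ))) •
      (((n:ℂ) * (circleMap y0 R a.2 - q.2) ^ (-(n:ℤ) - 1)) • (ContinuousLinearMap.snd ℂ ℂ ℂ))‖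
      ≤ (c ^ m)⁻¹ * ((n:ℝ) * (c ^ (n+1))⁻¹) := by
    refine le_trans (ContinuousLinearMap.opNorm_smul_le _ _) ?_
    exact mul_le_mul (norm_zpow_neg_le hc e1 m) s2 (norm_nonneg _) (by positivity)
  have hB : ‖((circleMap y0 R a.2 - q.2) ^ (-(n:ℤ))) •
      (((m:ℂ) * (circleMap x0 R a.1 - q.1) ^ (-(m:ℤ) - 1)) • (ContinuousLinearMap.fst ℂ ℂ ℂ))‖
      ≤ (c ^ n)⁻¹ * ((m:ℝ) * (c ^ (m+1))⁻¹) := by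
    refine le_trans (ContinuousLinearMap.opNorm_smul_le _ _) ?_
    exact mul_le_mul (norm_zpow_neg_le hc e2 n) s1 (norm_nonneg _) (by positivity)
  exact le_trans (norm_add_le _ _) (add_le_add hA hB)

end Deriv

section Claim1

variable {f : ℂ × ℂ → ℂ} {x0 y0 : ℂ} {R : ℝ}

lemma DK_continuous (hR : 0 < R) (m n : ℕ) {q : ℂ × ℂ}
    (h1 : dist q.1 x0 < R) (h2 : dist q.2 y0 < R) :
    Continuous (fun a => DK x0 y0 R m n q a) := by
  have c1 : Continuous fun a : ℝ × ℝ => circleMap x0 R a.1 - q.1 :=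
    ((continuous_circleMap x0 R).comp continuous_fst).sub continuous_const
  have c2 : Continuous fun a : ℝ × ℝ => circleMap y0 R a.2 - q.2 :=
    ((continuous_circleMap y0 R).comp continuous_snd).sub continuous_const
  have ne1 : ∀ a : ℝ × ℝ, circleMap x0 R a.1 - q.1 ≠ 0 := fun a => circle_sub_ne hR a.1 h1
  have ne2 : ∀ a : ℝ × ℝ, circleMap y0 R a.2 - q.2 ≠ 0 := fun a => circle_sub_ne hR a.2 h2
  exact ((c1.zpow₀ _ fun a => Or.inl (ne1 a)).smul
      ((continuous_const.mul (c2.zpow₀ _ fun a => Or.inl (ne2 a))).smul continuous_const)).add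
    ((c2.zpow₀ _ fun a => Or.inl (ne2 a)).smul
      ((continuous_const.mul (c1.zpow₀ _ fun a => Or.inl (ne1 a))).smul continuous_const))

lemma cInt_hasFDerivAt (hR : 0 < R)
    (hcont : ContinuousOn f (sphere x0 R ×ˢ sphere y0 R)) (m n : ℕ) {q0 : ℂ × ℂ}
    (h1 : dist q0.1 x0 < R) (h2 : dist q0.2 y0 < R) :
    HasFDerivAt (cInt f x0 y0 R m n)
      (((m:ℂ) * cInt f x0 y0 R (m+1) n q0) • (ContinuousLinearMap.fst ℂ ℂ ℂ)
        + ((n:ℂ) * cInt f x0 y0 R m (n+1) q0) • (ContinuousLinearMap.snd ℂ ℂ ℂ)) q0 := by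
  obtain ⟨M, hM0, hM⟩ := Wf_bound hR hcont
  set ε : ℝ := min (R - dist q0.1 x0) (R - dist q0.2 y0) / 2 with hε
  have hεpos : 0 < ε := by
    have : 0 < min (R - dist q0.1 x0) (R - dist q0.2 y0) :=
      lt_min (by linarith) (by linarith)
    positivity
  have key : ∀ q ∈ ball q0 ε, ε ≤ R - dist q.1 x0 ∧ ε ≤ R - dist q.2 y0 := by
    intro q hq
    rw [mem_ball] at hq
    have hd1 : dist q.1 q0.1 ≤ dist q q0 := by
      rw [Prod.dist_eq]; exact le_max_left _ _
    have hd2 : dist q.2 q0.2 ≤ dist q q0 := by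
      rw [Prod.dist_eq]; exact le_max_right _ _
    have e1 : dist q.1 x0 ≤ dist q q0 + dist q0.1 x0 :=
      le_trans (dist_triangle q.1 q0.1 x0) (by linarith)
    have e2 : dist q.2 y0 ≤ dist q q0 + dist q0.2 y0 :=
      le_trans (dist_triangle q.2 q0.2 y0) (by linarith)
    have m1 : ε ≤ (R - dist q0.1 x0) / 2 := by
      rw [hε]; gcongr; exact min_le_left _ _
    have m2 : ε ≤ (R - dist q0.2 y0) / 2 := by
      rw [hε]; gcongr; exact min_le_right _ _
    constructor <;> [skip; skip] <;> linarith
  have keyd : ∀ q ∈ ball q0 ε, dist q.1 x0 < R ∧ dist q.2 y0 < R := by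
    intro q hq
    obtain ⟨k1, k2⟩ := key q hq
    exact ⟨by linarith, by linarith⟩
  set B : ℝ := M * ((ε ^ m)⁻¹ * ((n:ℝ) * (ε ^ (n+1))⁻¹) + (ε ^ n)⁻¹ * ((m:ℝ) * (ε ^ (m+1))⁻¹))
    with hB
  have hF'int : Integrable (fun a => Wf f x0 y0 R a • DK x0 y0 R m n q0 a) μ2 := by
    apply integrable_of_bounded (((Wf_continuous hR hcont).smul
      (DK_continuous hR m n h1 h2)).aestronglyMeasurable) B
    intro a
    refine le_trans (ContinuousLinearMap.opNorm_smul_le _ _) ?_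
    rw [hB]
    have hq0 : q0 ∈ ball q0 ε := mem_ball_self hεpos
    exact mul_le_mul (hM a)
      (DK_norm_le hR m n hεpos (key q0 hq0).1 (key q0 hq0).2 a) (norm_nonneg _) hM0
  have main := hasFDerivAt_integral_of_dominated_of_fderiv_le (𝕜 := ℂ) (μ := μ2)
    (F := fun q a => Wf f x0 y0 R a * KK x0 y0 R m n q a)
    (F' := fun q a => Wf f x0 y0 R a • DK x0 y0 R m n q a)
    (x₀ := q0) (bound := fun _ => B) (ball_mem_nhds q0 hεpos)
    (Filter.eventually_of_mem (ball_mem_nhds q0 hεpos) (fun q hq =>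
      (((Wf_continuous hR hcont).mul
        (KK_continuous hR m n (keyd q hq).1 (keyd q hq).2)).aestronglyMeasurable)))
    (WK_integrable hR hcont m n h1 h2)
    (((Wf_continuous hR hcont).smul (DK_continuous hR m n h1 h2)).aestronglyMeasurable)
    (Filter.Eventually.of_forall (fun a q hq => by
      refine le_trans (ContinuousLinearMap.opNorm_smul_le _ _) ?_
      rw [hB]
      exact mul_le_mul (hM a)
        (DK_norm_le hR m n hεpos (key q hq).1 (key q hq).2 a) (norm_nonneg _) hM0))
    (integrable_const B)
    (Filter.Eventually.of_forall (fun a q hq =>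
      (hasFDerivAt_KK m n a (circle_sub_ne hR a.1 (keyd q hq).1)
        (circle_sub_ne hR a.2 (keyd q hq).2)).const_mul (Wf f x0 y0 R a)))
  have hEq : (∫ a, Wf f x0 y0 R a • DK x0 y0 R m n q0 a ∂μ2)
      = ((m:ℂ) * cInt f x0 y0 R (m+1) n q0) • (ContinuousLinearMap.fst ℂ ℂ ℂ)
        + ((n:ℂ) * cInt f x0 y0 R m (n+1) q0) • (ContinuousLinearMap.snd ℂ ℂ ℂ) := by
    refine ContinuousLinearMap.ext fun v => ?_
    rw [ContinuousLinearMap.integral_apply hF'int]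
    have hfun : (fun a => (Wf f x0 y0 R a • DK x0 y0 R m n q0 a) v)
        = fun a => ((m:ℂ) * v.1) * (Wf f x0 y0 R a * KK x0 y0 R (m+1) n q0 a)
          + ((n:ℂ) * v.2) * (Wf f x0 y0 R a * KK x0 y0 R m (n+1) q0 a) := by
      funext a
      simp only [DK, KK, ContinuousLinearMap.smul_apply, ContinuousLinearMap.add_apply,
        ContinuousLinearMap.coe_fst', ContinuousLinearMap.coe_snd', smul_eq_mul]
      rw [show (-(((m+1):ℕ):ℤ)) = -(m:ℤ) - 1 by push_cast; ring,
        show (-(((n+1):ℕ):ℤ)) = -(n:ℤ) - 1 by push_cast; ring]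
      ring
    rw [hfun]
    rw [integral_add ((WK_integrable hR hcont (m+1) n h1 h2).const_mul _)
      ((WK_integrable hR hcont m (n+1) h1 h2).const_mul _)]
    rw [MeasureTheory.integral_const_mul, MeasureTheory.integral_const_mul]
    simp only [ContinuousLinearMap.add_apply, ContinuousLinearMap.smul_apply,
      ContinuousLinearMap.coe_fst', ContinuousLinearMap.coe_snd', smul_eq_mul, cInt]
    ring
  rw [hEq] at main
  exact main

end Claim1

section Claim2

variable {f : ℂ × ℂ → ℂ} {x0 y0 : ℂ} {R : ℝ}

lemma cInt_pdx (hR : 0 < R)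
    (hcont : ContinuousOn f (sphere x0 R ×ˢ sphere y0 R)) (m n : ℕ) {q0 : ℂ × ℂ}
    (h1 : dist q0.1 x0 < R) (h2 : dist q0.2 y0 < R) :
    pdx (cInt f x0 y0 R m n) q0 = (m:ℂ) * cInt f x0 y0 R (m+1) n q0 := by
  have hF := cInt_hasFDerivAt hR hcont m n h1 h2
  have hg : HasDerivAt (fun t : ℂ => (t, q0.2)) ((1:ℂ), (0:ℂ)) q0.1 :=
    (hasDerivAt_id q0.1).prodMk (hasDerivAt_const q0.1 q0.2)
  have h3 := HasFDerivAt.comp_hasDerivAt q0.1 (by rw [Prod.mk.eta]; exact hF) hg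
  have h4 : HasDerivAt (fun t => cInt f x0 y0 R m n (t, q0.2))
      ((m:ℂ) * cInt f x0 y0 R (m+1) n q0) q0.1 := by
    refine h3.congr_deriv ?_
    simp [ContinuousLinearMap.add_apply, ContinuousLinearMap.smul_apply, smul_eq_mul]
  exact h4.deriv

lemma cInt_pdy (hR : 0 < R)
    (hcont : ContinuousOn f (sphere x0 R ×ˢ sphere y0 R)) (m n : ℕ) {q0 : ℂ × ℂ}
    (h1 : dist q0.1 x0 < R) (h2 : dist q0.2 y0 < R) :
    pdy (cInt f x0 y0 R m n) q0 = (n:ℂ) * cInt f x0 y0 R m (n+1) q0 := by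
  have hF := cInt_hasFDerivAt hR hcont m n h1 h2
  have hg : HasDerivAt (fun t : ℂ => (q0.1, t)) ((0:ℂ), (1:ℂ)) q0.2 :=
    (hasDerivAt_const q0.2 q0.1).prodMk (hasDerivAt_id q0.2)
  have h3 := HasFDerivAt.comp_hasDerivAt q0.2 (by rw [Prod.mk.eta]; exact hF) hg
  have h4 : HasDerivAt (fun t => cInt f x0 y0 R m n (q0.1, t))
      ((n:ℂ) * cInt f x0 y0 R m (n+1) q0) q0.2 := by
    refine h3.congr_deriv ?_
    simp [ContinuousLinearMap.add_apply, ContinuousLinearMap.smul_apply, smul_eq_mul]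
  exact h4.deriv

lemma integral_integral_eq {G : ℝ × ℝ → ℂ} (hG : Continuous G) (C : ℝ)
    (hC : ∀ a, ‖G a‖ ≤ C) :
    (∫ θ in (0:ℝ)..(2*π), ∫ φ in (0:ℝ)..(2*π), G (θ, φ)) = ∫ a, G a ∂μ2 := by
  have h2π : (0:ℝ) ≤ 2*π := by positivity
  have hint : Integrable (fun z : ℝ × ℝ => G (z.1, z.2)) μ2 :=
    integrable_of_bounded (by exact (hG.comp (continuous_fst.prodMk continuous_snd)).aestronglyMeasurable) C (fun a => hC _)
  rw [intervalIntegral.integral_of_le h2π]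
  have : ∀ θ : ℝ, (∫ φ in (0:ℝ)..(2*π), G (θ, φ)) = ∫ φ in Set.Ioc 0 (2*π), G (θ, φ) := fun θ =>
    intervalIntegral.integral_of_le h2π
  simp_rw [this]
  exact MeasureTheory.integral_integral hint

/-- The double Cauchy integral representation. -/
lemma rep (hR : 0 < R)
    (hd : DifferentiableOn ℂ f (closedBall x0 R ×ˢ closedBall y0 R))
    {q : ℂ × ℂ} (h1 : q.1 ∈ ball x0 R) (h2 : q.2 ∈ ball y0 R) :
    f q = (2*π*I)⁻¹ * ((2*π*I)⁻¹ * cInt f x0 y0 R 1 1 q) := by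
  have hcont : ContinuousOn f (sphere x0 R ×ˢ sphere y0 R) :=
    hd.continuousOn.mono (Set.prod_mono sphere_subset_closedBall sphere_subset_closedBall)
  have hd1 : dist q.1 x0 < R := mem_ball.1 h1
  have hd2 : dist q.2 y0 < R := mem_ball.1 h2
  -- slices
  have sliceY : ∀ z ∈ closedBall x0 R, DifferentiableOn ℂ (fun w => f (z, w)) (closedBall y0 R) := by
    intro z hz
    apply DifferentiableOn.comp hd (DifferentiableOn.prodMk
      (differentiableOn_const z) (differentiable_id.differentiableOn))
    intro w hw
    exact ⟨hz, hw⟩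
  have sliceX : DifferentiableOn ℂ (fun z => f (z, q.2)) (closedBall x0 R) := by
    apply DifferentiableOn.comp hd (DifferentiableOn.prodMk
      (differentiable_id.differentiableOn) (differentiableOn_const q.2))
    intro z hz
    exact ⟨hz, ball_subset_closedBall h2⟩
  have B : ∀ z ∈ sphere x0 R,
      (∮ w in C(y0, R), (w - q.2)⁻¹ • f (z, w)) = (2*π*I) • f (z, q.2) := fun z hz =>
    DifferentiableOn.circleIntegral_sub_inv_smul (sliceY z (sphere_subset_closedBall hz)) h2
  have A : (∮ z in C(x0, R), (z - q.1)⁻¹ • f (z, q.2)) = (2*π*I) • f (q.1, q.2) :=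
    DifferentiableOn.circleIntegral_sub_inv_smul sliceX h1
  have h2piI : (2*π*I) ≠ 0 := by
    simp [Real.pi_ne_zero, I_ne_zero, two_ne_zero]
  have hfq : f q = (2*π*I)⁻¹ * (∮ z in C(x0, R), (z - q.1)⁻¹ • f (z, q.2)) := by
    rw [A]
    simp only [smul_eq_mul, Prod.mk.eta]
    field_simp
  have hsub : (∮ z in C(x0, R), (z - q.1)⁻¹ • f (z, q.2))
      = ∮ z in C(x0, R), (z - q.1)⁻¹ • ((2*π*I)⁻¹ * ∮ w in C(y0, R), (w - q.2)⁻¹ • f (z, w)) := by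
    apply circleIntegral.integral_congr hR.le
    intro z hz
    beta_reduce
    rw [B z hz]
    simp only [smul_eq_mul]
    field_simp
  set J : ℝ → ℂ := fun θ =>
    ∮ w in C(y0, R), (w - q.2)⁻¹ * f (circleMap x0 R θ, w) with hJ
  have hout : (∮ z in C(x0, R), (z - q.1)⁻¹ • ((2*π*I)⁻¹ * ∮ w in C(y0, R), (w - q.2)⁻¹ • f (z, w)))
      = (2*π*I)⁻¹ * ∫ θ in (0:ℝ)..(2*π),
          (circleMap 0 R θ * I) * (circleMap x0 R θ - q.1)⁻¹ * J θ := by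
    rw [circleIntegral]
    simp only [deriv_circleMap, smul_eq_mul]
    rw [← intervalIntegral.integral_const_mul]
    congr 1
    funext θ
    ring
  have hin : ∀ θ : ℝ, (circleMap 0 R θ * I) * (circleMap x0 R θ - q.1)⁻¹ * J θ
      = ∫ φ in (0:ℝ)..(2*π), Wf f x0 y0 R (θ, φ) * KK x0 y0 R 1 1 q (θ, φ) := by
    intro θ
    have hJθ : J θ = ∫ φ in (0:ℝ)..(2*π), (circleMap 0 R φ * I) *
        ((circleMap y0 R φ - q.2)⁻¹ * f (circleMap x0 R θ, circleMap y0 R φ)) := by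
      rw [hJ]
      simp only [circleIntegral, deriv_circleMap, smul_eq_mul]
    rw [hJθ, ← intervalIntegral.integral_const_mul]
    congr 1
    funext φ
    simp only [Wf, KK]
    rw [show (-((1:ℕ):ℤ)) = -1 by norm_num]
    rw [zpow_neg_one, zpow_neg_one]
    ring
  -- assemble
  obtain ⟨M, hM0, hM⟩ := Wf_bound hR hcont
  set c : ℝ := min (R - dist q.1 x0) (R - dist q.2 y0) with hc
  have hcpos : 0 < c := lt_min (by linarith) (by linarith)
  have hWK : (∫ θ in (0:ℝ)..(2*π), ∫ φ in (0:ℝ)..(2*π),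
      Wf f x0 y0 R (θ, φ) * KK x0 y0 R 1 1 q (θ, φ)) = cInt f x0 y0 R 1 1 q := by
    apply integral_integral_eq ((Wf_continuous hR hcont).mul (KK_continuous hR 1 1 hd1 hd2))
      (M * ((c ^ 1)⁻¹ * (c ^ 1)⁻¹))
    intro a
    rw [Pi.mul_apply, norm_mul]
    exact mul_le_mul (hM a) (KK_bound hR 1 1 hcpos (min_le_left _ _) (min_le_right _ _) a)
      (norm_nonneg _) hM0
  rw [hfq, hsub, hout]
  congr 1
  congr 1
  rw [← hWK]
  apply intervalIntegral.integral_congr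
  intro θ _
  exact hin θ

end Claim2

section Core

variable {Ω : Set (ℂ × ℂ)} {f : ℂ × ℂ → ℂ} {p : ℂ × ℂ}

theorem core (hΩ : IsOpen Ω) (hf : DifferentiableOn ℂ f Ω) (hp : p ∈ Ω) :
    DifferentiableAt ℂ (pdx f) p ∧ DifferentiableAt ℂ (pdy f) p ∧
      pdx (pdy f) p = pdy (pdx f) p := by
  obtain ⟨ε, hε, hball⟩ := Metric.isOpen_iff.1 hΩ p hp
  set R : ℝ := ε/2 with hRdef
  have hR : 0 < R := by positivity
  have hprod : closedBall p.1 R ×ˢ closedBall p.2 R ⊆ Ω := by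
    have h1 : closedBall p.1 R ×ˢ closedBall p.2 R = closedBall p R := by
      rw [← Prod.mk.eta (p := p), closedBall_prod_same]
    rw [h1]
    exact subset_trans (closedBall_subset_ball (by rw [hRdef]; linarith)) hball
  have hd : DifferentiableOn ℂ f (closedBall p.1 R ×ˢ closedBall p.2 R) := hf.mono hprod
  have hcont : ContinuousOn f (sphere p.1 R ×ˢ sphere p.2 R) :=
    hd.continuousOn.mono (Set.prod_mono sphere_subset_closedBall sphere_subset_closedBall)
  set P : Set (ℂ × ℂ) := ball p.1 R ×ˢ ball p.2 R with hPdef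
  have hPopen : IsOpen P := isOpen_ball.prod isOpen_ball
  have hpP : p ∈ P := ⟨mem_ball_self hR, mem_ball_self hR⟩
  have hdist : ∀ q ∈ P, dist q.1 p.1 < R ∧ dist q.2 p.2 < R := fun q hq =>
    ⟨mem_ball.1 hq.1, mem_ball.1 hq.2⟩
  set C2 : ℂ := (2*π*I)⁻¹ with hC2
  have hrep : ∀ q ∈ P, f q = (fun q' => C2 * (C2 * cInt f p.1 p.2 R 1 1 q')) q := fun q hq =>
    rep hR hd hq.1 hq.2
  have hdiffInt : ∀ m n : ℕ, ∀ q ∈ P,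
      DifferentiableAt ℂ (cInt f p.1 p.2 R m n) q := fun m n q hq =>
    (cInt_hasFDerivAt hR hcont m n (hdist q hq).1 (hdist q hq).2).differentiableAt
  -- pdx of f on P
  have hpx : ∀ q ∈ P, pdx f q = (fun q' => C2 * (C2 * (((1:ℕ):ℂ) * cInt f p.1 p.2 R 2 1 q'))) q := by
    intro q hq
    rw [pdx_congr_of_isOpen hPopen hrep hq]
    rw [pdx_const_mul C2 ((hdiffInt 1 1 q hq).const_mul C2)]
    rw [pdx_const_mul C2 (hdiffInt 1 1 q hq)]
    rw [cInt_pdx hR hcont 1 1 (hdist q hq).1 (hdist q hq).2]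
  have hpy : ∀ q ∈ P, pdy f q = (fun q' => C2 * (C2 * (((1:ℕ):ℂ) * cInt f p.1 p.2 R 1 2 q'))) q := by
    intro q hq
    rw [pdy_congr_of_isOpen hPopen hrep hq]
    rw [pdy_const_mul C2 ((hdiffInt 1 1 q hq).const_mul C2)]
    rw [pdy_const_mul C2 (hdiffInt 1 1 q hq)]
    rw [cInt_pdy hR hcont 1 1 (hdist q hq).1 (hdist q hq).2]
  have hdx : DifferentiableAt ℂ (pdx f) p := by
    have hEv : pdx f =ᶠ[𝓝 p] (fun q' => C2 * (C2 * (((1:ℕ):ℂ) * cInt f p.1 p.2 R 2 1 q'))) :=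
      Filter.eventually_of_mem (hPopen.mem_nhds hpP) hpx
    rw [hEv.differentiableAt_iff]
    exact (((hdiffInt 2 1 p hpP).const_mul _).const_mul _).const_mul _
  have hdy : DifferentiableAt ℂ (pdy f) p := by
    have hEv : pdy f =ᶠ[𝓝 p] (fun q' => C2 * (C2 * (((1:ℕ):ℂ) * cInt f p.1 p.2 R 1 2 q'))) :=
      Filter.eventually_of_mem (hPopen.mem_nhds hpP) hpy
    rw [hEv.differentiableAt_iff]
    exact (((hdiffInt 1 2 p hpP).const_mul _).const_mul _).const_mul _
  refine ⟨hdx, hdy, ?_⟩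
  have e1 : pdx (pdy f) p = C2 * (C2 * (((1:ℕ):ℂ) * (((1:ℕ):ℂ) * cInt f p.1 p.2 R 2 2 p))) := by
    rw [pdx_congr_of_isOpen hPopen hpy hpP]
    rw [pdx_const_mul C2 (((hdiffInt 1 2 p hpP).const_mul _).const_mul _)]
    rw [pdx_const_mul C2 ((hdiffInt 1 2 p hpP).const_mul _)]
    rw [pdx_const_mul _ (hdiffInt 1 2 p hpP)]
    rw [cInt_pdx hR hcont 1 2 (hdist p hpP).1 (hdist p hpP).2]
  have e2 : pdy (pdx f) p = C2 * (C2 * (((1:ℕ):ℂ) * (((1:ℕ):ℂ) * cInt f p.1 p.2 R 2 2 p))) := by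
    rw [pdy_congr_of_isOpen hPopen hpx hpP]
    rw [pdy_const_mul C2 (((hdiffInt 2 1 p hpP).const_mul _).const_mul _)]
    rw [pdy_const_mul C2 ((hdiffInt 2 1 p hpP).const_mul _)]
    rw [pdy_const_mul _ (hdiffInt 2 1 p hpP)]
    rw [cInt_pdy hR hcont 2 1 (hdist p hpP).1 (hdist p hpP).2]
  rw [e1, e2]

theorem pdx_differentiableOn (hΩ : IsOpen Ω) (hf : DifferentiableOn ℂ f Ω) :
    DifferentiableOn ℂ (pdx f) Ω := fun q hq =>
  ((core hΩ hf hq).1).differentiableWithinAt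

theorem pdy_differentiableOn (hΩ : IsOpen Ω) (hf : DifferentiableOn ℂ f Ω) :
    DifferentiableOn ℂ (pdy f) Ω := fun q hq =>
  ((core hΩ hf hq).2.1).differentiableWithinAt

theorem pdx_pdy_comm (hΩ : IsOpen Ω) (hf : DifferentiableOn ℂ f Ω) (hp : p ∈ Ω) :
    pdx (pdy f) p = pdy (pdx f) p :=
  (core hΩ hf hp).2.2

end Core

end LaplaceAux

open LaplaceAux in
theorem laplace_transformation_minus
    (Ω : Set (ℂ × ℂ)) (hΩ : IsOpen Ω) (hne : Ω.Nonempty)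
    (a b c : ℂ × ℂ → ℂ)
    (ha : DifferentiableOn ℂ a Ω) (hb : DifferentiableOn ℂ b Ω)
    (hc : DifferentiableOn ℂ c Ω)
    (h k : ℂ × ℂ → ℂ)
    (hh : h = fun p => pdx a p + a p * b p - c p)
    (hk : k = fun p => pdy b p + a p * b p - c p)
    (hk0 : ∀ p ∈ Ω, k p ≠ 0)
    (aM bM cM : ℂ × ℂ → ℂ)
    (haM : aM = a)
    (hbM : bM = fun p => b p - pdx k p / k p)
    (hcM : cM = fun p => c p + pdx a p - pdy b p - a p * (pdx k p / k p)) :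
    (∀ u : ℂ × ℂ → ℂ, DifferentiableOn ℂ u Ω →
      (∀ p ∈ Ω, pdx (pdy u) p + a p * pdx u p + b p * pdy u p + c p * u p = 0) →
      ∀ p ∈ Ω,
        pdx (pdy (fun q => pdx u q + b q * u q)) p
          + aM p * pdx (fun q => pdx u q + b q * u q) p
          + bM p * pdy (fun q => pdx u q + b q * u q) p
          + cM p * (pdx u p + b p * u p) = 0) ∧
    (∀ p ∈ Ω, pdx aM p + aM p * bM p - cM p = k p) ∧
    (∀ p ∈ Ω, pdy bM p + aM p * bM p - cM p
        = 2 * k p - h p - pdx (fun q => pdy k q / k q) p) := by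
  have DA : ∀ {g : ℂ × ℂ → ℂ}, DifferentiableOn ℂ g Ω →
      ∀ {q : ℂ × ℂ}, q ∈ Ω → DifferentiableAt ℂ g q := fun hg _ hq =>
    hg.differentiableAt (hΩ.mem_nhds hq)
  -- differentiability of k
  have hkOn : DifferentiableOn ℂ k Ω := by
    rw [hk]
    exact ((pdy_differentiableOn hΩ hb).add (ha.mul hb)).sub hc
  have hpxkOn : DifferentiableOn ℂ (pdx k) Ω := pdx_differentiableOn hΩ hkOn
  have hpykOn : DifferentiableOn ℂ (pdy k) Ω := pdy_differentiableOn hΩ hkOn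
  -- expansion of pdx k
  have hXk : ∀ p ∈ Ω, pdx k p
      = pdx (pdy b) p + (pdx a p * b p + a p * pdx b p) - pdx c p := by
    intro p hp
    rw [hk]
    rw [pdx_sub ((DA (pdy_differentiableOn hΩ hb) hp).fun_add ((DA ha hp).fun_mul (DA hb hp))) (DA hc hp)]
    rw [pdx_add (DA (pdy_differentiableOn hΩ hb) hp) ((DA ha hp).fun_mul (DA hb hp))]
    rw [pdx_mul (DA ha hp) (DA hb hp)]
  refine ⟨?_, ?_, ?_⟩
  · -- part (i)
    intro u hu hpde p hp
    have huOn := hu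
    have hpxuOn : DifferentiableOn ℂ (pdx u) Ω := pdx_differentiableOn hΩ hu
    have hpyuOn : DifferentiableOn ℂ (pdy u) Ω := pdy_differentiableOn hΩ hu
    -- E1 : pdy v = (pdy b - c) u - a * pdx u on Ω
    have E1 : ∀ q ∈ Ω, pdy (fun q' => pdx u q' + b q' * u q') q
        = (fun q' => (pdy b q' - c q') * u q' - a q' * pdx u q') q := by
      intro q hq
      rw [pdy_add (DA hpxuOn hq) ((DA hb hq).fun_mul (DA hu hq))]
      rw [pdy_mul (DA hb hq) (DA hu hq)]
      rw [← pdx_pdy_comm hΩ hu hq]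
      have hpq := hpde q hq
      simp only
      linear_combination hpq
    -- expand pdx (pdy v) at p
    have H1 : pdx (pdy (fun q' => pdx u q' + b q' * u q')) p
        = ((pdx (pdy b) p - pdx c p) * u p + (pdy b p - c p) * pdx u p)
          - (pdx a p * pdx u p + a p * pdx (pdx u) p) := by
      rw [pdx_congr_of_isOpen hΩ E1 hp]
      rw [pdx_sub (((DA (pdy_differentiableOn hΩ hb) hp).fun_sub (DA hc hp)).fun_mul (DA hu hp))
        ((DA ha hp).fun_mul (DA hpxuOn hp))]
      rw [pdx_mul ((DA (pdy_differentiableOn hΩ hb) hp).fun_sub (DA hc hp)) (DA hu hp)]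
      rw [pdx_mul (DA ha hp) (DA hpxuOn hp)]
      rw [pdx_sub (DA (pdy_differentiableOn hΩ hb) hp) (DA hc hp)]
    have H2 : pdx (fun q' => pdx u q' + b q' * u q') p
        = pdx (pdx u) p + (pdx b p * u p + b p * pdx u p) := by
      rw [pdx_add (DA hpxuOn hp) ((DA hb hp).fun_mul (DA hu hp))]
      rw [pdx_mul (DA hb hp) (DA hu hp)]
    have H3 := E1 p hp
    have hXkp := hXk p hp
    have hkp : k p = pdy b p + a p * b p - c p := by rw [hk]
    have hk0p := hk0 p hp
    rw [H1, H2, H3, haM, hbM, hcM]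
    simp only
    rw [hXkp, hkp] at *
    field_simp
    ring
  · -- part (ii) first identity
    intro p hp
    have hkp : k p = pdy b p + a p * b p - c p := by rw [hk]
    have hk0p := hk0 p hp
    rw [haM, hbM, hcM, hkp]
    simp only
    rw [hkp] at hk0p
    field_simp
    ring
  · -- part (ii) second identity
    intro p hp
    have hk0p := hk0 p hp
    -- pdy bM
    have hdiv : DifferentiableAt ℂ (fun q => pdx k q / k q) p := by
      have hrw : (fun q : ℂ × ℂ => pdx k q / k q) = fun q => pdx k q * (k q)⁻¹ := by
        funext q; rw [div_eq_mul_inv]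
      rw [hrw]
      exact (DA hpxkOn hp).mul ((DA hkOn hp).inv hk0p)
    have HbM : pdy bM p = pdy b p
        - (pdy (pdx k) p * k p - pdx k p * pdy k p) / (k p) ^ 2 := by
      rw [hbM]
      rw [pdy_sub (DA hb hp) hdiv]
      rw [pdy_div (DA hpxkOn hp) (DA hkOn hp) hk0p]
    have Hsym : pdy (pdx k) p = pdx (pdy k) p := (pdx_pdy_comm hΩ hkOn hp).symm
    have HR : pdx (fun q => pdy k q / k q) p
        = (pdx (pdy k) p * k p - pdy k p * pdx k p) / (k p) ^ 2 :=
      pdx_div (DA hpykOn hp) (DA hkOn hp) hk0p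
    have hkp : k p = pdy b p + a p * b p - c p := by rw [hk]
    have hhp : h p = pdx a p + a p * b p - c p := by rw [hh]
    rw [HbM, Hsym, HR, haM, hbM, hcM, hhp]
    simp only
    rw [hkp] at hk0p ⊢
    field_simp
    ring
end

section
/- Let N ≥ 2 and let u be a holomorphic function on the space of 2×N complex matrices z = (z_{a,p})_{a∈{0,1}, 0≤p<N}. Fix two distinct column indices α ≠ β in {0,…,N−1} and define (Lu)(z) = z_{0,α}·(∂_{0,β}u)(z) + z_{1,α}·(∂_{1,β}u)(z). If □_{p,q}u = 0 for all p, q ∈ {0,…,N−1}, then □_{p,q}(Lu) = 0 for all p, q ∈ {0,…,N−1}. -/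
set_option maxHeartbeats 1600000
set_option synthInstance.maxHeartbeats 400000
set_option linter.unusedSectionVars false

/-- Partial derivative of a function of a 2×N complex matrix (viewed as
`Fin 2 → ι → ℂ`) with respect to the entry in row `a`, column `q`. -/
noncomputable def pd {ι : Type} [DecidableEq ι] (a : Fin 2) (q : ι)
    (u : (Fin 2 → ι → ℂ) → ℂ) : (Fin 2 → ι → ℂ) → ℂ :=
  fun z => deriv (fun s : ℂ => u (fun a' q' => z a' q' + if a' = a ∧ q' = q then s else 0)) 0

/-- The operator `□_{p,q} = ∂_{0,p}∂_{1,q} − ∂_{1,p}∂_{0,q}` of the Gelfand system. -/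
noncomputable def box {ι : Type} [DecidableEq ι] (p q : ι)
    (u : (Fin 2 → ι → ℂ) → ℂ) : (Fin 2 → ι → ℂ) → ℂ :=
  fun z => pd 0 p (pd 1 q u) z - pd 1 p (pd 0 q u) z

namespace GelfandAux

open Metric Complex intervalIntegral Real

section General

variable {E : Type*} [NormedAddCommGroup E] [NormedSpace ℂ E] [FiniteDimensional ℂ E]
  [MeasurableSpace E] [BorelSpace E]

lemma hasDerivAt_slice {f : E → ℂ} {z : E} (hf : DifferentiableAt ℂ f z) (v : E) :
    HasDerivAt (fun s : ℂ => f (z + s • v)) (fderiv ℂ f z v) 0 := by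
  have hz : z + (0:ℂ) • v = z := by simp
  have hline : HasDerivAt (fun s : ℂ => z + s • v) v 0 := by
    simpa using ((hasDerivAt_id (0:ℂ)).smul_const v).const_add z
  have hF : HasFDerivAt f (fderiv ℂ f z) (z + (0:ℂ) • v) := by
    rw [hz]; exact hf.hasFDerivAt
  exact hF.comp_hasDerivAt (0:ℂ) hline

/-- Cauchy integral representation of the directional derivative. -/
lemma fderiv_rep {f : E → ℂ} (hf : Differentiable ℂ f) (v : E) (z : E) :
    fderiv ℂ f z v = (2 * π * I : ℂ)⁻¹ * ∫ θ in (0:ℝ)..(2*π),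
      ((circleMap 0 1 θ * I) * ((1 / circleMap 0 1 θ) ^ 1 * (circleMap 0 1 θ)⁻¹))
        * f (z + circleMap 0 1 θ • v) := by
  set g : ℂ → ℂ := fun s => f (z + s • v) with hg_def
  have hg : Differentiable ℂ g :=
    hf.comp ((differentiable_id.smul_const v).const_add z)
  have hps : HasFPowerSeriesOnBall g (cauchyPowerSeries g 0 1) 0 ⊤ :=
    hg.hasFPowerSeriesOnBall 0 (R := 1) one_pos
  have hd : deriv g 0 = cauchyPowerSeries g 0 1 1 (fun _ => (1:ℂ)) :=
    hps.hasFPowerSeriesAt.deriv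
  have hd2 : deriv g 0 = fderiv ℂ f z v := (hasDerivAt_slice (hf z) v).deriv
  rw [← hd2, hd, cauchyPowerSeries_apply]
  rw [circleIntegral]
  simp only [smul_eq_mul, sub_zero, deriv_circleMap]
  congr 1
  apply intervalIntegral.integral_congr
  intro θ _
  simp only [hg_def]
  ring

lemma fderiv_bound {f : E → ℂ} (hf : Differentiable ℂ f) {z₀ : E} {r M : ℝ}
    (hM : ∀ w ∈ closedBall z₀ (r+1), ‖f w‖ ≤ M) :
    ∀ w ∈ closedBall z₀ r, ‖fderiv ℂ f w‖ ≤ 2*M+1 := by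
  intro w hw
  have hwr : dist w z₀ ≤ r := mem_closedBall.1 hw
  have hr : 0 ≤ r := le_trans dist_nonneg hwr
  have hM0 : 0 ≤ M :=
    le_trans (norm_nonneg _) (hM z₀ (by simp [mem_closedBall]; linarith))
  apply ContinuousLinearMap.opNorm_le_bound _ (by linarith)
  intro x
  rcases eq_or_ne x 0 with rfl | hx
  · simp
  have hxn : (0:ℝ) < ‖x‖ := norm_pos_iff.2 hx
  set g : ℂ → ℂ := fun s => f (w + s • x) with hg_def
  have hgd : Differentiable ℂ g :=
    hf.comp ((differentiable_id.smul_const x).const_add w)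
  have hmem : ∀ s : ℂ, s ∈ ball (0:ℂ) ‖x‖⁻¹ → w + s • x ∈ closedBall z₀ (r+1) := by
    intro s hs
    have hs' : ‖s‖ < ‖x‖⁻¹ := by simpa [mem_ball, dist_eq_norm] using hs
    have hd1 : dist (w + s • x) z₀ ≤ ‖s • x‖ + dist w z₀ := by
      calc dist (w + s • x) z₀ ≤ dist (w + s • x) w + dist w z₀ := dist_triangle _ _ _
      _ = ‖s • x‖ + dist w z₀ := by rw [dist_eq_norm]; simp
    have h1 : ‖s • x‖ ≤ 1 := by
      rw [norm_smul]
      calc ‖s‖ * ‖x‖ ≤ ‖x‖⁻¹ * ‖x‖ :=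
            mul_le_mul_of_nonneg_right hs'.le (norm_nonneg _)
      _ = 1 := inv_mul_cancel₀ hxn.ne'
    exact mem_closedBall.2 (by linarith)
  have hmaps : Set.MapsTo g (ball (0:ℂ) ‖x‖⁻¹) (ball (g 0) (2*M+1)) := by
    intro s hs
    have h0 : ‖g 0‖ ≤ M := hM _ (hmem 0 (by simpa [mem_ball] using inv_pos.2 hxn))
    have h1 : ‖g s‖ ≤ M := hM _ (hmem s hs)
    have : dist (g s) (g 0) ≤ ‖g s‖ + ‖g 0‖ := dist_le_norm_add_norm _ _
    exact mem_ball.2 (by linarith)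
  have hsl := Complex.norm_deriv_le_div_of_mapsTo_ball hgd.differentiableOn (hmaps.mono_right ball_subset_closedBall) (inv_pos.2 hxn)
  have hder : deriv g 0 = fderiv ℂ f w x := (hasDerivAt_slice (hf w) x).deriv
  rw [hder] at hsl
  calc ‖fderiv ℂ f w x‖ ≤ (2*M+1) / ‖x‖⁻¹ := hsl
    _ = (2*M+1) * ‖x‖ := by field_simp

/-- Key lemma: directional derivatives of an entire function are entire. -/
lemma differentiable_fderiv_apply {f : E → ℂ} (hf : Differentiable ℂ f) (v : E) :
    Differentiable ℂ fun z => fderiv ℂ f z v := by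
  set φ : ℝ → ℂ := fun θ =>
    (circleMap 0 1 θ * I) * ((1 / circleMap 0 1 θ) ^ 1 * (circleMap 0 1 θ)⁻¹) with hφ_def
  have hφc : Continuous φ := by
    apply Continuous.mul
    · exact (continuous_circleMap 0 1).mul continuous_const
    · exact ((continuous_const.div (continuous_circleMap 0 1)
        (fun θ => circleMap_ne_center one_ne_zero)).pow 1).mul
        ((continuous_circleMap 0 1).inv₀ (fun θ => circleMap_ne_center one_ne_zero))
  have hφn : ∀ θ, ‖φ θ‖ = 1 := by
    intro θ
    have h1 : ‖circleMap 0 1 θ‖ = 1 := by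
      simp [norm_circleMap_zero]
    simp [hφ_def, norm_mul, norm_inv, norm_div, h1, Complex.norm_I]
  have key : ∀ z₀ : E, DifferentiableAt ℂ
      (fun z => ∫ θ in (0:ℝ)..(2*π), φ θ * f (z + circleMap 0 1 θ • v)) z₀ := by
    intro z₀
    obtain ⟨M, hM⟩ := (isCompact_closedBall z₀ (‖v‖+1+1)).exists_bound_of_continuousOn
      hf.continuous.continuousOn
    have hop : ∀ w ∈ closedBall z₀ (‖v‖+1), ‖fderiv ℂ f w‖ ≤ 2*M+1 :=
      fderiv_bound hf hM
    have hcont : ∀ x : E, Continuous fun θ : ℝ => φ θ * f (x + circleMap 0 1 θ • v) := by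
      intro x
      exact hφc.mul (hf.continuous.comp
        (continuous_const.add ((continuous_circleMap 0 1).smul continuous_const)))
    have hmemball : ∀ x ∈ ball z₀ (1:ℝ), ∀ θ : ℝ,
        x + circleMap 0 1 θ • v ∈ closedBall z₀ (‖v‖+1) := by
      intro x hx θ
      have h1 : dist (x + circleMap 0 1 θ • v) z₀ ≤ ‖circleMap 0 1 θ • v‖ + dist x z₀ := by
        calc dist (x + circleMap 0 1 θ • v) z₀
            ≤ dist (x + circleMap 0 1 θ • v) x + dist x z₀ := dist_triangle _ _ _
          _ = ‖circleMap 0 1 θ • v‖ + dist x z₀ := by rw [dist_eq_norm]; simp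
      have h2 : ‖circleMap 0 1 θ • v‖ = ‖v‖ := by
        rw [norm_smul]; simp [norm_circleMap_zero]
      have h3 : dist x z₀ < 1 := mem_ball.1 hx
      rw [h2] at h1
      exact mem_closedBall.2 (by linarith)
    have := intervalIntegral.hasFDerivAt_integral_of_dominated_of_fderiv_le
      (F := fun (x : E) (θ : ℝ) => φ θ * f (x + circleMap 0 1 θ • v))
      (F' := fun (x : E) (θ : ℝ) => φ θ • fderiv ℂ f (x + circleMap 0 1 θ • v))
      (x₀ := z₀) (a := 0) (b := 2*π) (μ := MeasureTheory.volume)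
      (bound := fun _ => 2*M+1) (s := ball z₀ 1) (ball_mem_nhds z₀ one_pos)
      (Filter.Eventually.of_forall fun x => (hcont x).aestronglyMeasurable)
      ((hcont z₀).intervalIntegrable _ _)
      ?_ ?_ (intervalIntegrable_const) ?_
    · exact this.differentiableAt
    · have m1 : Measurable fun θ : ℝ => fderiv ℂ f (z₀ + circleMap 0 1 θ • v) :=
        (measurable_fderiv ℂ f).comp
          (continuous_const.add ((continuous_circleMap 0 1).smul continuous_const)).measurable
      exact (hφc.aestronglyMeasurable).smul m1.aestronglyMeasurable
    · refine MeasureTheory.ae_of_all _ fun θ _ => fun x hx => ?_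
      show ‖φ θ • fderiv ℂ f (x + circleMap 0 1 θ • v)‖ ≤ 2*M+1
      rw [norm_smul, hφn, one_mul]
      exact hop _ (hmemball x hx θ)
    · refine MeasureTheory.ae_of_all _ fun θ _ => fun x hx => ?_
      have h1 : HasFDerivAt (fun y : E => y + circleMap 0 1 θ • v)
          (ContinuousLinearMap.id ℂ E) x := (hasFDerivAt_id x).add_const _
      have h2 := ((hf (x + circleMap 0 1 θ • v)).hasFDerivAt.comp x h1)
      simpa [ContinuousLinearMap.comp_id] using h2.const_mul (φ θ)
  have hrep : (fun z => fderiv ℂ f z v)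
      = fun z => (2 * π * I : ℂ)⁻¹ * ∫ θ in (0:ℝ)..(2*π), φ θ * f (z + circleMap 0 1 θ • v) :=
    funext (fderiv_rep hf v)
  rw [hrep]
  exact fun z₀ => (key z₀).const_mul _

end General

section Matrix

variable {ι : Type} [DecidableEq ι] [Fintype ι]

/-- The standard basis vector with a `1` in position `(a, q)`. -/
def e (a : Fin 2) (q : ι) : Fin 2 → ι → ℂ := fun a' q' => if a' = a ∧ q' = q then 1 else 0

/-- The coordinate functional `z ↦ z b c` as a continuous linear map. -/
noncomputable def pi' (b : Fin 2) (c : ι) : (Fin 2 → ι → ℂ) →L[ℂ] ℂ :=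
  (ContinuousLinearMap.proj (R := ℂ) (φ := fun _ : ι => ℂ) c).comp
    (ContinuousLinearMap.proj (R := ℂ) (φ := fun _ : Fin 2 => ι → ℂ) b)

lemma pi'_apply (b : Fin 2) (c : ι) (z : Fin 2 → ι → ℂ) : pi' b c z = z b c := rfl

lemma coe_pi' (b : Fin 2) (c : ι) : (fun z : Fin 2 → ι → ℂ => z b c) = ⇑(pi' b c) := rfl

lemma sum_basis (z : Fin 2 → ι → ℂ) :
    z = ∑ a : Fin 2, ∑ q : ι, z a q • e a q := by
  funext a' q'
  simp only [Finset.sum_apply, Pi.smul_apply, e, smul_eq_mul, mul_ite, mul_one, mul_zero, ite_and]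
  rw [Finset.sum_comm]
  simp [Finset.sum_ite_eq']

lemma clm_decomp (L : (Fin 2 → ι → ℂ) →L[ℂ] ℂ) :
    L = ∑ a : Fin 2, ∑ q : ι, L (e a q) • pi' a q := by
  ext z
  conv_lhs => rw [sum_basis z]
  rw [map_sum]
  simp only [map_sum, map_smul, ContinuousLinearMap.sum_apply, ContinuousLinearMap.smul_apply,
    pi'_apply, smul_eq_mul]
  congr 1; funext a; congr 1; funext q; ring

lemma line_eq (z : Fin 2 → ι → ℂ) (a : Fin 2) (q : ι) (s : ℂ) :
    (fun a' q' => z a' q' + if a' = a ∧ q' = q then s else 0) = z + s • e a q := by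
  funext a' q'
  by_cases h : a' = a ∧ q' = q <;> simp [e, h]

lemma pd_eq_fderiv {u : (Fin 2 → ι → ℂ) → ℂ} {z} (hu : DifferentiableAt ℂ u z)
    (a : Fin 2) (q : ι) : pd a q u z = fderiv ℂ u z (e a q) := by
  have h1 : HasDerivAt (fun s : ℂ => u (z + s • e a q)) (fderiv ℂ u z (e a q)) 0 :=
    hasDerivAt_slice hu (e a q)
  have h2 : (fun s : ℂ => u (fun a' q' => z a' q' + if a' = a ∧ q' = q then s else 0))
      = fun s : ℂ => u (z + s • e a q) := by
    funext s; rw [line_eq]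
  rw [pd, h2, h1.deriv]

lemma pd_fun_eq {u : (Fin 2 → ι → ℂ) → ℂ} (hu : Differentiable ℂ u) (a : Fin 2) (q : ι) :
    pd a q u = fun z => fderiv ℂ u z (e a q) :=
  funext fun z => pd_eq_fderiv (hu z) a q

lemma pd_diff {u : (Fin 2 → ι → ℂ) → ℂ} (hu : Differentiable ℂ u) (a : Fin 2) (q : ι) :
    Differentiable ℂ (pd a q u) := by
  rw [pd_fun_eq hu a q]
  exact differentiable_fderiv_apply hu (e a q)

lemma differentiable_fderiv {u : (Fin 2 → ι → ℂ) → ℂ} (hu : Differentiable ℂ u) :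
    Differentiable ℂ (fderiv ℂ u) := by
  have h : fderiv ℂ u = fun z => ∑ a : Fin 2, ∑ q : ι, (fderiv ℂ u z (e a q)) • pi' a q :=
    funext fun z => clm_decomp (fderiv ℂ u z)
  rw [h]
  apply Differentiable.fun_sum
  intro a _
  apply Differentiable.fun_sum
  intro q _
  exact (differentiable_fderiv_apply hu (e a q)).smul_const (pi' a q)

/-- Schwarz symmetry of second partial derivatives. -/
lemma pd_swap {u : (Fin 2 → ι → ℂ) → ℂ} (hu : Differentiable ℂ u) (a b : Fin 2) (p q : ι)
    (z : Fin 2 → ι → ℂ) : pd a p (pd b q u) z = pd b q (pd a p u) z := by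
  have h2 : Differentiable ℂ (fderiv ℂ u) := differentiable_fderiv hu
  have hkey : ∀ w v : Fin 2 → ι → ℂ,
      fderiv ℂ (fun y => fderiv ℂ u y w) z v = fderiv ℂ (fderiv ℂ u) z v w := by
    intro w v
    have h3 := fderiv_clm_apply (𝕜 := ℂ) (c := fderiv ℂ u) (u := fun _ => w)
      (h2 z) (differentiableAt_const w)
    rw [h3]
    simp
  have hsym := second_derivative_symmetric (f := u) (f' := fderiv ℂ u)
    (fun y => (hu y).hasFDerivAt) (h2 z).hasFDerivAt
  rw [pd_fun_eq hu b q, pd_fun_eq hu a p,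
    pd_eq_fderiv ((differentiable_fderiv_apply hu (e b q)) z) a p,
    pd_eq_fderiv ((differentiable_fderiv_apply hu (e a p)) z) b q,
    hkey (e b q) (e a p), hkey (e a p) (e b q), hsym]

lemma pd_add {f g : (Fin 2 → ι → ℂ) → ℂ} (hf : Differentiable ℂ f) (hg : Differentiable ℂ g)
    (a : Fin 2) (r : ι) (z : Fin 2 → ι → ℂ) :
    pd a r (fun w => f w + g w) z = pd a r f z + pd a r g z := by
  rw [pd_eq_fderiv ((hf z).fun_add (hg z)) a r, fderiv_fun_add (hf z) (hg z),
    pd_eq_fderiv (hf z) a r, pd_eq_fderiv (hg z) a r]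
  simp

lemma pd_sub {f g : (Fin 2 → ι → ℂ) → ℂ} (hf : Differentiable ℂ f) (hg : Differentiable ℂ g)
    (a : Fin 2) (r : ι) (z : Fin 2 → ι → ℂ) :
    pd a r (fun w => f w - g w) z = pd a r f z - pd a r g z := by
  rw [pd_eq_fderiv ((hf z).fun_sub (hg z)) a r, fderiv_fun_sub (hf z) (hg z),
    pd_eq_fderiv (hf z) a r, pd_eq_fderiv (hg z) a r]
  simp

lemma pd_zero (a : Fin 2) (r : ι) (z : Fin 2 → ι → ℂ) :
    pd a r (fun _ => (0:ℂ)) z = 0 := by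
  simp [pd]

lemma pd_mul_const {f : (Fin 2 → ι → ℂ) → ℂ} (hf : Differentiable ℂ f) (k : ℂ)
    (a : Fin 2) (r : ι) (z : Fin 2 → ι → ℂ) :
    pd a r (fun w => f w * k) z = pd a r f z * k := by
  rw [pd_eq_fderiv ((hf z).mul_const k) a r, fderiv_mul_const (hf z) k,
    pd_eq_fderiv (hf z) a r]
  simp [mul_comm]

lemma pd_coord_mul {v : (Fin 2 → ι → ℂ) → ℂ} (hv : Differentiable ℂ v) (a : Fin 2) (r : ι)
    (b : Fin 2) (c : ι) (z : Fin 2 → ι → ℂ) :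
    pd a r (fun w => w b c * v w) z
      = z b c * pd a r v z + v z * (if b = a ∧ c = r then 1 else 0) := by
  have hπ : DifferentiableAt ℂ (fun w : Fin 2 → ι → ℂ => w b c) z := by
    rw [coe_pi']; exact (pi' b c).differentiable.differentiableAt
  rw [pd_eq_fderiv (hπ.fun_mul (hv z)) a r, fderiv_fun_mul hπ (hv z)]
  have hfd : fderiv ℂ (fun w : Fin 2 → ι → ℂ => w b c) z = pi' b c := by
    rw [coe_pi']; exact (pi' b c).fderiv
  simp only [ContinuousLinearMap.add_apply, ContinuousLinearMap.smul_apply, smul_eq_mul, hfd]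
  rw [← pd_eq_fderiv (hv z) a r]
  have : pi' b c (e a r) = (if b = a ∧ c = r then 1 else 0) := rfl
  rw [this]

end Matrix

end GelfandAux

open GelfandAux

theorem contiguity_operator_preserves_gelfand_solutions
    (N : ℕ) (hN : 2 ≤ N)
    (u : (Fin 2 → Fin N → ℂ) → ℂ) (hu : Differentiable ℂ u)
    (α β : Fin N) (hαβ : α ≠ β)
    (L : (Fin 2 → Fin N → ℂ) → ℂ)
    (hL : ∀ z, L z = z 0 α * pd 0 β u z + z 1 α * pd 1 β u z)
    (hbox : ∀ p q : Fin N, ∀ z, box p q u z = 0) :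
    ∀ p q : Fin N, ∀ z, box p q L z = 0 := by
  set U0 : (Fin 2 → Fin N → ℂ) → ℂ := pd 0 β u with hU0_def
  set U1 : (Fin 2 → Fin N → ℂ) → ℂ := pd 1 β u with hU1_def
  have hU0 : Differentiable ℂ U0 := pd_diff hu 0 β
  have hU1 : Differentiable ℂ U1 := pd_diff hu 1 β
  have hLfun : L = fun z => z 0 α * U0 z + z 1 α * U1 z := funext hL
  have hcoord : ∀ (b : Fin 2) (c : Fin N),
      Differentiable ℂ (fun z : Fin 2 → Fin N → ℂ => z b c) := by
    intro b c; rw [coe_pi']; exact (pi' b c).differentiable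
  have hP0 : Differentiable ℂ (fun z : Fin 2 → Fin N → ℂ => z 0 α * U0 z) :=
    (hcoord 0 α).mul hU0
  have hP1 : Differentiable ℂ (fun z : Fin 2 → Fin N → ℂ => z 1 α * U1 z) :=
    (hcoord 1 α).mul hU1
  have hdU0 : ∀ (a : Fin 2) (r : Fin N), Differentiable ℂ (pd a r U0) := fun a r => pd_diff hU0 a r
  have hdU1 : ∀ (a : Fin 2) (r : Fin N), Differentiable ℂ (pd a r U1) := fun a r => pd_diff hU1 a r
  have hfalse : ((0 : Fin 2) = 1) = False := by decide
  have htrue : ((1 : Fin 2) = 1) = True := by decide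
  have htrue0 : ((0 : Fin 2) = 0) = True := by decide
  have hfalse1 : ((1 : Fin 2) = 0) = False := by decide
  -- first derivatives of L
  have hM : ∀ (a : Fin 2) (r : Fin N), pd a r L = fun w =>
      (w 0 α * pd a r U0 w + U0 w * (if (0:Fin 2) = a ∧ α = r then 1 else 0)) +
      (w 1 α * pd a r U1 w + U1 w * (if (1:Fin 2) = a ∧ α = r then 1 else 0)) := by
    intro a r
    funext w
    rw [hLfun, pd_add hP0 hP1 a r w, pd_coord_mul hU0 a r 0 α w, pd_coord_mul hU1 a r 1 α w]
  intro p q z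
  -- second derivatives
  have hM1q := hM 1 q
  have hM0q := hM 0 q
  have hdM1 : ∀ a r, Differentiable ℂ (fun w : Fin 2 → Fin N → ℂ =>
      w 0 α * pd a r U0 w + U0 w * (if (0:Fin 2) = a ∧ α = r then 1 else 0)) := fun a r =>
    ((hcoord 0 α).mul (hdU0 a r)).add (hU0.mul_const _)
  have hdM2 : ∀ a r, Differentiable ℂ (fun w : Fin 2 → Fin N → ℂ =>
      w 1 α * pd a r U1 w + U1 w * (if (1:Fin 2) = a ∧ α = r then 1 else 0)) := fun a r =>
    ((hcoord 1 α).mul (hdU1 a r)).add (hU1.mul_const _)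
  have E1 : pd 0 p (pd 1 q L) z
      = (z 0 α * pd 0 p (pd 1 q U0) z + pd 1 q U0 z * (if α = p then 1 else 0))
      + (z 1 α * pd 0 p (pd 1 q U1) z + pd 0 p U1 z * (if α = q then 1 else 0)) := by
    rw [hM1q, pd_add (hdM1 1 q) (hdM2 1 q) 0 p z,
      pd_add ((hcoord 0 α).fun_mul (hdU0 1 q)) (hU0.mul_const _) 0 p z,
      pd_add ((hcoord 1 α).fun_mul (hdU1 1 q)) (hU1.mul_const _) 0 p z,
      pd_coord_mul (hdU0 1 q) 0 p 0 α z, pd_coord_mul (hdU1 1 q) 0 p 1 α z,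
      pd_mul_const hU0 _ 0 p z, pd_mul_const hU1 _ 0 p z]
    simp only [hfalse, htrue, htrue0, hfalse1, false_and, true_and, if_false, if_true,
      mul_zero, mul_one, add_zero, zero_add, ite_false]
  have E2 : pd 1 p (pd 0 q L) z
      = (z 0 α * pd 1 p (pd 0 q U0) z + pd 1 p U0 z * (if α = q then 1 else 0))
      + (z 1 α * pd 1 p (pd 0 q U1) z + pd 0 q U1 z * (if α = p then 1 else 0)) := by
    rw [hM0q, pd_add (hdM1 0 q) (hdM2 0 q) 1 p z,
      pd_add ((hcoord 0 α).fun_mul (hdU0 0 q)) (hU0.mul_const _) 1 p z,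
      pd_add ((hcoord 1 α).fun_mul (hdU1 0 q)) (hU1.mul_const _) 1 p z,
      pd_coord_mul (hdU0 0 q) 1 p 0 α z, pd_coord_mul (hdU1 0 q) 1 p 1 α z,
      pd_mul_const hU0 _ 1 p z, pd_mul_const hU1 _ 1 p z]
    simp only [hfalse, htrue, htrue0, hfalse1, false_and, true_and, if_false, if_true,
      mul_zero, mul_one, add_zero, zero_add, ite_false]
  -- vanishing identities
  have F1 : pd 0 p U1 z - pd 1 p U0 z = 0 := hbox p β z
  have F2 : pd 0 q U1 z - pd 1 q U0 z = 0 := hbox q β z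
  have hboxfun : ∀ p' q' : Fin N,
      (fun w => pd 0 p' (pd 1 q' u) w - pd 1 p' (pd 0 q' u) w) = fun _ => (0:ℂ) :=
    fun p' q' => funext fun w => hbox p' q' w
  have F3 : pd 0 p (pd 1 q U0) z - pd 1 p (pd 0 q U0) z = 0 := by
    have s1 : pd 1 q U0 = pd 0 β (pd 1 q u) := funext fun w => pd_swap hu 1 0 q β w
    have s2 : pd 0 q U0 = pd 0 β (pd 0 q u) := funext fun w => pd_swap hu 0 0 q β w
    rw [s1, s2, pd_swap (pd_diff hu 1 q) 0 0 p β z, pd_swap (pd_diff hu 0 q) 1 0 p β z,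
      ← pd_sub (pd_diff (pd_diff hu 1 q) 0 p) (pd_diff (pd_diff hu 0 q) 1 p) 0 β z,
      hboxfun p q, pd_zero]
  have F4 : pd 0 p (pd 1 q U1) z - pd 1 p (pd 0 q U1) z = 0 := by
    have s1 : pd 1 q U1 = pd 1 β (pd 1 q u) := funext fun w => pd_swap hu 1 1 q β w
    have s2 : pd 0 q U1 = pd 1 β (pd 0 q u) := funext fun w => pd_swap hu 0 1 q β w
    rw [s1, s2, pd_swap (pd_diff hu 1 q) 0 1 p β z, pd_swap (pd_diff hu 0 q) 1 1 p β z,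
      ← pd_sub (pd_diff (pd_diff hu 1 q) 0 p) (pd_diff (pd_diff hu 0 q) 1 p) 1 β z,
      hboxfun p q, pd_zero]
  show pd 0 p (pd 1 q L) z - pd 1 p (pd 0 q L) z = 0
  rw [E1, E2]
  linear_combination (if α = q then (1:ℂ) else 0) * F1 - (if α = p then (1:ℂ) else 0) * F2
    + z 0 α * F3 + z 1 α * F4
end

section
/- Let N ≥ 2, let u be a holomorphic function on the space of 2×N complex matrices, and let g ∈ SL(2,ℂ). Define v(z) = u(g⁻¹·z) (matrix product of the 2×2 matrix g⁻¹ with the 2×N matrix z). If □_{p,q}u = 0 for all p, q ∈ {0,…,N−1}, then □_{p,q}v = 0 for all p, q ∈ {0,…,N−1}. -/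
set_option synthInstance.maxHeartbeats 1000000
set_option maxHeartbeats 1000000
set_option linter.unusedVariables false

open MeasureTheory Metric Real Complex

variable {E : Type*} [NormedAddCommGroup E] [NormedSpace ℂ E]

lemma cm_ne (θ : ℝ) : circleMap 0 1 θ ≠ 0 := circleMap_ne_center one_ne_zero

lemma diff_line (y w : E) : Differentiable ℂ (fun s : ℂ => y + s • w) :=
  (differentiable_id.smul_const w).const_add y

lemma hasDerivAt_slice (u : E → ℂ) (hu : Differentiable ℂ u) (y w : E) :
    HasDerivAt (fun s : ℂ => u (y + s • w)) (fderiv ℂ u y w) 0 := by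
  have h1 : HasDerivAt (fun s : ℂ => y + s • w) w 0 := by
    simpa using ((hasDerivAt_id (0 : ℂ)).smul_const w).const_add y
  have h2 : HasFDerivAt u (fderiv ℂ u y) (y + (0 : ℂ) • w) := by
    simpa using (hu y).hasFDerivAt
  simpa [Function.comp_def] using h2.comp_hasDerivAt 0 h1

lemma rep (u : E → ℂ) (hu : Differentiable ℂ u) (y w : E) :
    fderiv ℂ u y w = (2 * (π : ℂ))⁻¹ *
      ∫ θ in (0:ℝ)..(2 * π), (circleMap 0 1 θ)⁻¹ * u (y + circleMap 0 1 θ • w) := by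
  set f : ℂ → ℂ := fun s => u (y + s • w) with hf
  have hfd : Differentiable ℂ f := hu.comp (diff_line y w)
  have h0 : fderiv ℂ u y w = deriv f 0 := ((hasDerivAt_slice u hu y w).deriv).symm
  have hps : HasFPowerSeriesAt f (cauchyPowerSeries f 0 1) 0 :=
    (hfd.hasFPowerSeriesOnBall 0 one_pos).hasFPowerSeriesAt
  have h1 : deriv f 0 = (cauchyPowerSeries f 0 1).coeff 1 := hps.deriv
  rw [h0, h1]
  have h2 := cauchyPowerSeries_apply f 0 1 1 1
  simp only [FormalMultilinearSeries.coeff]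
  rw [show (1 : Fin 1 → ℂ) = fun _ => (1:ℂ) from rfl, h2, circleIntegral]
  have h3 : (fun θ : ℝ => deriv (circleMap 0 1) θ •
      ((1 / (circleMap 0 1 θ - 0)) ^ 1 • (circleMap 0 1 θ - 0)⁻¹ • f (circleMap 0 1 θ)))
      = fun θ : ℝ => I * ((circleMap 0 1 θ)⁻¹ * u (y + circleMap 0 1 θ • w)) := by
    funext θ
    have hc := cm_ne θ
    simp only [deriv_circleMap, sub_zero, smul_eq_mul, one_div, pow_one, hf]
    field_simp
  rw [h3, intervalIntegral.integral_const_mul, smul_eq_mul]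
  rw [show (2 * (π:ℂ) * I)⁻¹ * (I * ∫ θ in (0:ℝ)..(2*π), (circleMap 0 1 θ)⁻¹ * u (y + circleMap 0 1 θ • w))
    = ((2 * (π:ℂ) * I)⁻¹ * I) * ∫ θ in (0:ℝ)..(2*π), (circleMap 0 1 θ)⁻¹ * u (y + circleMap 0 1 θ • w) from by ring]
  congr 1
  have : (π:ℂ) ≠ 0 := ofReal_ne_zero.2 pi_ne_zero
  field_simp

lemma norm_fderiv_apply_le (u : E → ℂ) (hu : Differentiable ℂ u) (y w : E) {C : ℝ}
    (hC : ∀ θ : ℝ, ‖u (y + circleMap 0 1 θ • w)‖ ≤ C) : ‖fderiv ℂ u y w‖ ≤ C := by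
  have hC0 : 0 ≤ C := le_trans (norm_nonneg _) (hC 0)
  rw [rep u hu y w]
  rw [norm_mul]
  have h1 : ‖(2 * (π : ℂ))⁻¹‖ = (2 * π)⁻¹ := by
    rw [norm_inv]
    norm_cast
    simp [abs_of_pos Real.two_pi_pos, Real.pi_nonneg]
  have h2 : ‖∫ θ in (0:ℝ)..(2 * π), (circleMap 0 1 θ)⁻¹ * u (y + circleMap 0 1 θ • w)‖
      ≤ C * |2 * π - 0| := by
    apply intervalIntegral.norm_integral_le_of_norm_le_const
    intro θ _
    rw [norm_mul, norm_inv]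
    have : ‖circleMap 0 1 θ‖ = 1 := by
      simp [norm_circleMap_zero]
    rw [this]
    simpa using hC θ
  calc ‖(2 * (π : ℂ))⁻¹‖ * ‖∫ θ in (0:ℝ)..(2 * π), (circleMap 0 1 θ)⁻¹ * u (y + circleMap 0 1 θ • w)‖
      ≤ (2 * π)⁻¹ * (C * |2 * π - 0|) := by
        rw [h1]
        exact mul_le_mul_of_nonneg_left h2 (inv_nonneg.2 (by linarith [Real.pi_pos]))
    _ = C := by
        rw [sub_zero, abs_of_pos Real.two_pi_pos]
        field_simp

lemma norm_fderiv_le (u : E → ℂ) (hu : Differentiable ℂ u) {C R : ℝ} {y₀ y : E}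
    (hC : ∀ z ∈ closedBall y₀ R, ‖u z‖ ≤ C) (hy : ‖y - y₀‖ + 1 ≤ R) :
    ‖fderiv ℂ u y‖ ≤ C := by
  have hC0 : 0 ≤ C := le_trans (norm_nonneg _)
    (hC y₀ (mem_closedBall_self (by linarith [norm_nonneg (y - y₀)])))
  have key : ∀ w' : E, ‖w'‖ ≤ 1 → ‖fderiv ℂ u y w'‖ ≤ C := by
    intro w' h1
    apply norm_fderiv_apply_le u hu
    intro θ
    apply hC
    rw [mem_closedBall, dist_eq_norm]
    have : ‖circleMap 0 1 θ‖ = 1 := by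
      simp [norm_circleMap_zero]
    calc ‖y + circleMap 0 1 θ • w' - y₀‖ = ‖(y - y₀) + circleMap 0 1 θ • w'‖ := by congr 1; abel
      _ ≤ ‖y - y₀‖ + ‖circleMap 0 1 θ • w'‖ := norm_add_le _ _
      _ = ‖y - y₀‖ + ‖circleMap 0 1 θ‖ * ‖w'‖ := by rw [norm_smul]
      _ ≤ ‖y - y₀‖ + 1 := by rw [this]; nlinarith [norm_nonneg (y - y₀)]
      _ ≤ R := hy
  apply ContinuousLinearMap.opNorm_le_bound _ hC0
  intro w
  rcases eq_or_ne w 0 with hw | hw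
  · simp [hw, hC0]
  · have hn : ‖w‖ ≠ 0 := norm_ne_zero_iff.2 hw
    have hw' : w = (‖w‖ : ℝ) • ((‖w‖⁻¹ : ℝ) • w) := by
      rw [smul_smul]
      field_simp
      rw [one_smul]
    calc ‖fderiv ℂ u y w‖ = ‖fderiv ℂ u y ((‖w‖ : ℝ) • ((‖w‖⁻¹ : ℝ) • w))‖ := by rw [← hw']
      _ = ‖w‖ * ‖fderiv ℂ u y ((‖w‖⁻¹ : ℝ) • w)‖ := by
          rw [ContinuousLinearMap.map_smul_of_tower, norm_smul, Real.norm_eq_abs, _root_.abs_of_nonneg (norm_nonneg w)]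
      _ ≤ ‖w‖ * C := by
          apply mul_le_mul_of_nonneg_left _ (norm_nonneg w)
          apply key
          rw [norm_smul, Real.norm_eq_abs, _root_.abs_of_nonneg (inv_nonneg.2 (norm_nonneg w)),
            inv_mul_cancel₀ hn]
      _ = C * ‖w‖ := mul_comm _ _

lemma fderiv_apply_diff [FiniteDimensional ℂ E] [MeasurableSpace E] [BorelSpace E]
    (u : E → ℂ) (hu : Differentiable ℂ u) (x : E) :
    Differentiable ℂ (fun y => fderiv ℂ u y x) := by
  intro y₀
  obtain ⟨C, hC⟩ := (isCompact_closedBall y₀ (2 + ‖x‖)).exists_bound_of_continuousOn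
    hu.continuous.continuousOn
  set F : E → ℝ → ℂ := fun y θ => (circleMap 0 1 θ)⁻¹ * u (y + circleMap 0 1 θ • x) with hF
  set F' : E → ℝ → (E →L[ℂ] ℂ) :=
    fun y θ => (circleMap 0 1 θ)⁻¹ • fderiv ℂ u (y + circleMap 0 1 θ • x) with hF'
  have hcm : Continuous fun θ : ℝ => (circleMap 0 1 θ)⁻¹ :=
    (continuous_circleMap 0 1).inv₀ cm_ne
  have hpt : Continuous fun θ : ℝ => y₀ + circleMap 0 1 θ • x :=
    continuous_const.add ((continuous_circleMap 0 1).smul continuous_const)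
  have contθ : ∀ y : E, Continuous (F y) := fun y =>
    hcm.mul (hu.continuous.comp (continuous_const.add
      ((continuous_circleMap 0 1).smul continuous_const)))
  have cmnorm : ∀ θ : ℝ, ‖circleMap 0 1 θ‖ = 1 := fun θ => by
    simp [norm_circleMap_zero]
  have key := intervalIntegral.hasFDerivAt_integral_of_dominated_of_fderiv_le
    (μ := MeasureTheory.volume) (a := (0:ℝ)) (b := 2 * π) (F := F) (F' := F') (x₀ := y₀)
    (bound := fun _ => C) (s := ball y₀ 1) (ball_mem_nhds y₀ one_pos)
    (Filter.Eventually.of_forall fun y => (contθ y).aestronglyMeasurable)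
    ((contθ y₀).intervalIntegrable _ _)
    ?_ ?_ intervalIntegrable_const ?_
  · have hrep : (fun y => fderiv ℂ u y x)
        = fun y => (2 * (π : ℂ))⁻¹ * ∫ θ in (0:ℝ)..(2 * π), F y θ :=
      funext fun y => rep u hu y x
    rw [hrep]
    exact (key.differentiableAt).const_mul _
  · -- measurability of F' y₀
    apply Measurable.aestronglyMeasurable
    exact (hcm.measurable).smul ((measurable_fderiv ℂ u).comp hpt.measurable)
  · -- bound
    apply Filter.Eventually.of_forall
    intro θ _ y hy
    rw [hF']
    simp only
    refine le_trans (ContinuousLinearMap.opNorm_smul_le _ _) ?_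
    rw [norm_inv, cmnorm θ, inv_one, one_mul]
    apply norm_fderiv_le u hu hC
    have h1 : ‖y + circleMap 0 1 θ • x - y₀‖ ≤ ‖y - y₀‖ + ‖x‖ := by
      calc ‖y + circleMap 0 1 θ • x - y₀‖ = ‖(y - y₀) + circleMap 0 1 θ • x‖ := by congr 1; abel
        _ ≤ ‖y - y₀‖ + ‖circleMap 0 1 θ • x‖ := norm_add_le _ _
        _ = ‖y - y₀‖ + ‖x‖ := by rw [norm_smul, cmnorm θ, one_mul]
    have h2 : ‖y - y₀‖ < 1 := by
      rw [← dist_eq_norm]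
      exact mem_ball.mp hy
    linarith
  · -- differentiability in y
    apply Filter.Eventually.of_forall
    intro θ _ y _
    have ht : HasFDerivAt (fun y : E => y + circleMap 0 1 θ • x)
        (ContinuousLinearMap.id ℂ E) y := (hasFDerivAt_id y).add_const _
    have h2 := ((hu (y + circleMap 0 1 θ • x)).hasFDerivAt.comp y ht).const_mul
      ((circleMap 0 1 θ)⁻¹)
    simpa [ContinuousLinearMap.comp_id] using h2

def bas {ι : Type} [DecidableEq ι] (a : Fin 2) (q : ι) : Fin 2 → ι → ℂ :=
  fun a' q' => if a' = a ∧ q' = q then 1 else 0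

lemma pd_eq {ι : Type} [DecidableEq ι] [Fintype ι] (a : Fin 2) (q : ι)
    (u : (Fin 2 → ι → ℂ) → ℂ) (z : Fin 2 → ι → ℂ) :
    pd a q u z = deriv (fun s : ℂ => u (z + s • bas a q)) 0 := by
  unfold pd
  congr 1
  funext s
  congr 1
  funext a' q'
  simp [bas, mul_ite]

lemma pd_fderiv {ι : Type} [DecidableEq ι] [Fintype ι] (a : Fin 2) (q : ι)
    (u : (Fin 2 → ι → ℂ) → ℂ) (hu : Differentiable ℂ u) (z : Fin 2 → ι → ℂ) :
    pd a q u z = fderiv ℂ u z (bas a q) := by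
  rw [pd_eq]
  exact (hasDerivAt_slice u hu z (bas a q)).deriv

lemma D_left [FiniteDimensional ℂ E] [MeasurableSpace E] [BorelSpace E]
    (u : E → ℂ) (hu : Differentiable ℂ u) (y w x1 x2 : E) (c1 c2 : ℂ) :
    fderiv ℂ (fun z' => fderiv ℂ u z' (c1 • x1 + c2 • x2)) y w
      = c1 * fderiv ℂ (fun z' => fderiv ℂ u z' x1) y w
        + c2 * fderiv ℂ (fun z' => fderiv ℂ u z' x2) y w := by
  have h1 : DifferentiableAt ℂ (fun z' => fderiv ℂ u z' x1) y := fderiv_apply_diff u hu x1 y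
  have h2 : DifferentiableAt ℂ (fun z' => fderiv ℂ u z' x2) y := fderiv_apply_diff u hu x2 y
  have he : (fun z' => fderiv ℂ u z' (c1 • x1 + c2 • x2))
      = fun z' => c1 • fderiv ℂ u z' x1 + c2 • fderiv ℂ u z' x2 := by
    funext z'
    simp
  rw [he, fderiv_fun_add (f := fun z' => c1 • fderiv ℂ u z' x1) (g := fun z' => c2 • fderiv ℂ u z' x2) (h1.const_smul c1) (h2.const_smul c2)]
  rw [ContinuousLinearMap.add_apply, fderiv_fun_const_smul h1, fderiv_fun_const_smul h2]
  simp

theorem sl2_action_preserves_gelfand_solutions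
    (N : ℕ) (hN : 2 ≤ N)
    (u : (Fin 2 → Fin N → ℂ) → ℂ) (hu : Differentiable ℂ u)
    (g : Matrix.SpecialLinearGroup (Fin 2) ℂ)
    (v : (Fin 2 → Fin N → ℂ) → ℂ)
    (hv : ∀ z, v z = u (fun a p => ∑ b : Fin 2,
      ((g⁻¹ : Matrix.SpecialLinearGroup (Fin 2) ℂ) : Matrix (Fin 2) (Fin 2) ℂ) a b * z b p))
    (hbox : ∀ p q : Fin N, ∀ z, box p q u z = 0) :
    ∀ p q : Fin N, ∀ z, box p q v z = 0 := by
  intro p q z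
  set h : Matrix (Fin 2) (Fin 2) ℂ :=
    ((g⁻¹ : Matrix.SpecialLinearGroup (Fin 2) ℂ) : Matrix (Fin 2) (Fin 2) ℂ) with hh
  set L : (Fin 2 → Fin N → ℂ) → (Fin 2 → Fin N → ℂ) :=
    fun z' a p' => ∑ b : Fin 2, h a b * z' b p' with hL
  have hvL : ∀ z', v z' = u (L z') := hv
  have hLlin : ∀ (z' x : Fin 2 → Fin N → ℂ) (s : ℂ), L (z' + s • x) = L z' + s • L x := by
    intro z' x s
    funext a p'
    simp only [hL, Pi.add_apply, Pi.smul_apply, smul_eq_mul, mul_add, Finset.sum_add_distrib,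
      Finset.mul_sum]
    congr 1
    apply Finset.sum_congr rfl
    intros
    ring
  have hLbas : ∀ (a : Fin 2) (q' : Fin N),
      L (bas a q') = h 0 a • bas 0 q' + h 1 a • bas 1 q' := by
    intro a q'
    funext a' p'
    fin_cases a <;> fin_cases a' <;>
      simp [hL, bas, Fin.sum_univ_two, mul_ite]
  -- first derivatives of v
  have pdv : ∀ (a : Fin 2) (q' : Fin N) (z' : Fin 2 → Fin N → ℂ),
      pd a q' v z' = fderiv ℂ u (L z') (L (bas a q')) := by
    intro a q' z'
    rw [pd_eq]
    have : (fun s : ℂ => v (z' + s • bas a q'))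
        = fun s : ℂ => u (L z' + s • L (bas a q')) := by
      funext s
      rw [hvL, hLlin]
    rw [this]
    exact (hasDerivAt_slice u hu (L z') (L (bas a q'))).deriv
  -- second derivatives of v
  have key : ∀ (a b : Fin 2) (p' q' : Fin N),
      pd a p' (pd b q' v) z
        = fderiv ℂ (fun y => fderiv ℂ u y (L (bas b q'))) (L z) (L (bas a p')) := by
    intro a b p' q'
    rw [pd_eq]
    have : (fun s : ℂ => pd b q' v (z + s • bas a p'))
        = fun s : ℂ => (fun y => fderiv ℂ u y (L (bas b q'))) (L z + s • L (bas a p')) := by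
      funext s
      rw [pdv, hLlin]
    rw [this]
    exact (hasDerivAt_slice _ (fderiv_apply_diff u hu _) (L z) (L (bas a p'))).deriv
  -- second derivatives of u
  have keyu : ∀ (a b : Fin 2) (p' q' : Fin N) (y : Fin 2 → Fin N → ℂ),
      pd a p' (pd b q' u) y
        = fderiv ℂ (fun y' => fderiv ℂ u y' (bas b q')) y (bas a p') := by
    intro a b p' q' y
    rw [pd_eq]
    have : (fun s : ℂ => pd b q' u (y + s • bas a p'))
        = fun s : ℂ => (fun y' => fderiv ℂ u y' (bas b q')) (y + s • bas a p') := by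
      funext s
      rw [pd_fderiv _ _ u hu]
    rw [this]
    exact (hasDerivAt_slice _ (fderiv_apply_diff u hu _) y (bas a p')).deriv
  -- the hypothesis at L z
  have hb : fderiv ℂ (fun y' => fderiv ℂ u y' (bas 1 q)) (L z) (bas 0 p)
      = fderiv ℂ (fun y' => fderiv ℂ u y' (bas 0 q)) (L z) (bas 1 p) := by
    have := hbox p q (L z)
    rw [box, keyu, keyu] at this
    exact sub_eq_zero.mp this
  show pd 0 p (pd 1 q v) z - pd 1 p (pd 0 q v) z = 0
  rw [key 0 1 p q, key 1 0 p q, hLbas, hLbas, hLbas, hLbas, D_left u hu, D_left u hu]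
  simp only [map_add, _root_.map_smul, smul_eq_mul]
  linear_combination (h 0 0 * h 1 1 - h 0 1 * h 1 0) * hb
end

section
/- Let λ = (n_1,…,n_ℓ) be a partition of N and let h be the N×N block-diagonal matrix with j-th diagonal block h^{(j)} = Σ_{0≤k<n_j} h^{(j)}_k Λ^k, where Λ is the n_j×n_j shift matrix (Λ_{a,b} = δ_{a+1,b}) and h^{(j)}_k ∈ ℂ. Write the columns of a 2×N matrix z in blocks z = (z^{(1)},…,z^{(ℓ)}) with z^{(m)} of size 2×n_m, and write ∂^{(m)}_{a,k} for the partial derivative in the (a,k)-entry of the m-th block. For 1 ≤ i, j ≤ ℓ and 0 ≤ p < n_i, 0 ≤ q < n_j set □^{(i,j)}_{p,q}u = ∂^{(i)}_{0,p}∂^{(j)}_{1,q}u − ∂^{(i)}_{1,p}∂^{(j)}_{0,q}u. Then for every holomorphic u on the space of 2×N matrices, the function v(z) = u(z·h) satisfies (□^{(i,j)}_{p,q}v)(z) = Σ_{p≤a<n_i} Σ_{q≤b<n_j} (□^{(i,j)}_{a,b}u)(z·h)·h^{(i)}_{a−p}·h^{(j)}_{b−q}. Consequently, if □^{(i,j)}_{p,q}u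 = 0 for all i, j, p, q, then □^{(i,j)}_{p,q}v = 0 for all i, j, p, q. -/
set_option linter.unusedSectionVars false
set_option maxHeartbeats 1000000



/-- Column index set for a 2×N matrix written in blocks according to the
partition `λ = (n 0, …, n (ℓ-1))`: a block label together with a position in the block. -/
abbrev Idx (ℓ : ℕ) (n : Fin ℓ → ℕ) : Type := (j : Fin ℓ) × Fin (n j)

open Metric Complex intervalIntegral Real

section Generic

variable {E : Type*} [NormedAddCommGroup E] [NormedSpace ℂ E] [FiniteDimensional ℂ E]
  [MeasurableSpace E] [BorelSpace E]

/-- directional derivative equals fderiv applied -/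
theorem dderiv_eq {u : E → ℂ} (hu : Differentiable ℂ u) (z x : E) :
    deriv (fun s : ℂ => u (z + s • x)) 0 = fderiv ℂ u z x := by
  have hline : HasDerivAt (fun s : ℂ => z + s • x) x 0 :=
    (((hasDerivAt_id (0 : ℂ)).smul_const x).const_add z).congr_deriv (by simp)
  have := (hu (z + (0:ℂ) • x)).hasFDerivAt.comp_hasDerivAt 0 hline
  simpa [Function.comp_def] using this.deriv

set_option linter.unusedSectionVars false

/-- Local uniform bound on the derivative via Cauchy's estimate. -/
theorem fderiv_bound {u : E → ℂ} (hu : Differentiable ℂ u) (w : E) (R : ℝ) :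
    ∃ C : ℝ, 0 ≤ C ∧ ∀ z ∈ closedBall w R, ∀ x : E, ‖fderiv ℂ u z x‖ ≤ C * ‖x‖ := by
  obtain ⟨M, hM⟩ := (isCompact_closedBall w (R + 1)).exists_bound_of_continuousOn
    hu.continuous.continuousOn
  refine ⟨max M 0, le_max_right _ _, fun z hz x => ?_⟩
  rcases eq_or_ne x 0 with rfl | hx
  · simp
  · have hxn : (0:ℝ) < ‖x‖ := norm_pos_iff.mpr hx
    set x' : E := ‖x‖⁻¹ • x with hx'
    have hx'n : ‖x'‖ = 1 := by
      rw [hx', norm_smul, norm_inv, norm_norm, inv_mul_cancel₀ hxn.ne']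
    have hdiff : Differentiable ℂ (fun t : ℂ => u (z + t • x')) :=
      hu.comp ((differentiable_id.smul_const x').const_add z)
    have hball : ∀ t ∈ sphere (0:ℂ) 1, ‖u (z + t • x')‖ ≤ max M 0 := by
      intro t ht
      refine le_trans (hM _ ?_) (le_max_left _ _)
      have : ‖z + t • x' - w‖ ≤ R + 1 := by
        calc ‖z + t • x' - w‖ = ‖(z - w) + t • x'‖ := by
              rw [add_sub_right_comm]
          _ ≤ ‖z - w‖ + ‖t • x'‖ := norm_add_le _ _
          _ ≤ R + 1 := by
              have h1 : ‖z - w‖ ≤ R := mem_closedBall_iff_norm.mp hz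
              have h2 : ‖t • x'‖ = 1 := by
                rw [norm_smul, hx'n, mul_one]
                simpa using mem_sphere_iff_norm.mp ht
              linarith
      exact mem_closedBall_iff_norm.mpr this
    have key : ‖deriv (fun t : ℂ => u (z + t • x')) 0‖ ≤ max M 0 / 1 :=
      Complex.norm_deriv_le_of_forall_mem_sphere_norm_le one_pos hdiff.diffContOnCl hball
    rw [dderiv_eq hu z x'] at key
    have heq : fderiv ℂ u z x = ‖x‖ • fderiv ℂ u z x' := by
      rw [hx', (fderiv ℂ u z).map_smul_of_tower, smul_smul,
        mul_inv_cancel₀ hxn.ne', one_smul]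
    rw [heq, norm_smul, norm_norm]
    rw [div_one] at key
    calc ‖x‖ * ‖fderiv ℂ u z x'‖ ≤ ‖x‖ * (max M 0) :=
          mul_le_mul_of_nonneg_left key hxn.le
      _ = max M 0 * ‖x‖ := mul_comm _ _

open MeasureTheory in
/-- Cauchy integral representation of the directional derivative. -/
theorem fderiv_rep {u : E → ℂ} (hu : Differentiable ℂ u) (z y : E) :
    fderiv ℂ u z y = (2 * π * I : ℂ)⁻¹ •
      ∫ θ in (0:ℝ)..(2*π), (circleMap 0 1 θ * I) •
        ((circleMap 0 1 θ ^ (-2:ℤ)) • u (z + circleMap 0 1 θ • y)) := by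
  have hdiff : Differentiable ℂ (fun t : ℂ => u (z + t • y)) :=
    hu.comp ((differentiable_id.smul_const y).const_add z)
  have h1 := hdiff.diffContOnCl.deriv_eq_smul_circleIntegral (c := (0:ℂ)) (R := 1) one_pos
  rw [← dderiv_eq hu z y,
    ← inv_smul_smul₀ Complex.two_pi_I_ne_zero (deriv (fun t : ℂ => u (z + t • y)) 0), ← h1]
  congr 1
  simp only [circleIntegral, deriv_circleMap, sub_zero, one_div, zpow_neg, zpow_ofNat]

noncomputable def mixedD (u : E → ℂ) (w x y : E) : ℂ :=
  (2 * π * I : ℂ)⁻¹ • ∫ θ in (0:ℝ)..(2*π), (circleMap 0 1 θ * I) •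
      ((circleMap 0 1 θ ^ (-2:ℤ)) • fderiv ℂ u (w + circleMap 0 1 θ • y) x)

open MeasureTheory in
theorem hasDerivAt_mixedD {u : E → ℂ} (hu : Differentiable ℂ u) (w x y : E) :
    HasDerivAt (fun s : ℂ => fderiv ℂ u (w + s • x) y) (mixedD u w x y) 0 ∧
    IntervalIntegrable (fun θ => (circleMap 0 1 θ * I) •
      ((circleMap 0 1 θ ^ (-2:ℤ)) • fderiv ℂ u (w + circleMap 0 1 θ • y) x))
      volume 0 (2*π) := by
  have hcne : ∀ θ : ℝ, circleMap 0 1 θ ≠ 0 := fun θ => by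
    intro h
    have := norm_circleMap_zero 1 θ
    rw [h] at this; simp at this
  have hczpow : Continuous (fun θ : ℝ => circleMap 0 1 θ ^ (-2:ℤ)) := by
    have : (fun θ : ℝ => circleMap 0 1 θ ^ (-2:ℤ))
        = fun θ : ℝ => ((circleMap 0 1 θ) ^ (2:ℕ))⁻¹ := by
      funext θ; rw [zpow_neg]; norm_cast
    rw [this]
    exact ((continuous_circleMap 0 1).pow 2).inv₀ (fun θ => pow_ne_zero _ (hcne θ))
  set F : ℂ → ℝ → ℂ := fun s θ => (circleMap 0 1 θ * I) •
      ((circleMap 0 1 θ ^ (-2:ℤ)) • u (w + s • x + circleMap 0 1 θ • y)) with hF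
  set F' : ℂ → ℝ → ℂ := fun s θ => (circleMap 0 1 θ * I) •
      ((circleMap 0 1 θ ^ (-2:ℤ)) • fderiv ℂ u (w + s • x + circleMap 0 1 θ • y) x) with hF'
  obtain ⟨C, hC0, hC⟩ := fderiv_bound hu w (‖x‖ + ‖y‖)
  have habs : ∀ θ : ℝ, ‖circleMap 0 1 θ‖ = 1 := fun θ => by
    simpa using norm_circleMap_zero 1 θ
  have hmem : ∀ (s : ℂ), ‖s‖ ≤ 1 → ∀ θ : ℝ,
      w + s • x + circleMap 0 1 θ • y ∈ closedBall w (‖x‖ + ‖y‖) := by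
    intro s hs θ
    rw [mem_closedBall_iff_norm]
    have : w + s • x + circleMap 0 1 θ • y - w = s • x + circleMap 0 1 θ • y := by
      abel
    rw [this]
    calc ‖s • x + circleMap 0 1 θ • y‖ ≤ ‖s • x‖ + ‖circleMap 0 1 θ • y‖ := norm_add_le _ _
      _ ≤ ‖x‖ + ‖y‖ := by
          rw [norm_smul, norm_smul]
          have h1 : ‖s‖ ≤ 1 := hs
          have h2 : ‖circleMap 0 1 θ‖ = 1 := habs θ
          rw [h2, one_mul]
          exact add_le_add (by nlinarith [norm_nonneg x, norm_nonneg (s•x)]) le_rfl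
  have key := intervalIntegral.hasDerivAt_integral_of_dominated_loc_of_deriv_le
    (F := F) (F' := F') (x₀ := (0:ℂ)) (a := (0:ℝ)) (b := 2*π) (μ := volume)
    (bound := fun _ => C * ‖x‖) (s := ball 0 1) (ball_mem_nhds 0 one_pos)
    (Filter.Eventually.of_forall (fun s => by
      apply Continuous.aestronglyMeasurable
      exact (((continuous_circleMap 0 1).mul continuous_const).smul
        (hczpow.smul (hu.continuous.comp (by continuity))))))
    (by
      apply Continuous.intervalIntegrable
      exact (((continuous_circleMap 0 1).mul continuous_const).smul
        (hczpow.smul (hu.continuous.comp (by continuity)))))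
    (by
      apply Measurable.aestronglyMeasurable
      have m1 : Measurable (fun z : E => fderiv ℂ u z x) :=
        measurable_fderiv_apply_const ℂ u x
      have m2 : Measurable (fun θ : ℝ => w + (0:ℂ) • x + circleMap 0 1 θ • y) := by
        exact (Continuous.measurable (by continuity))
      exact (((continuous_circleMap 0 1).mul continuous_const).measurable).smul
        (hczpow.measurable.smul (m1.comp m2)))
    (Filter.Eventually.of_forall (fun θ _ s hs => by
      have hsle : ‖s‖ ≤ 1 := by
        have := mem_ball_iff_norm.mp hs
        simpa using this.le
      have hpt := hC _ (hmem s hsle θ) x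
      simp only [hF', norm_smul, norm_mul, habs θ, Complex.norm_I,
        one_mul, mul_one]
      have hz2 : ‖circleMap 0 1 θ ^ (-2:ℤ)‖ = 1 := by
        rw [norm_zpow, habs θ, one_zpow]
      rw [hz2, one_mul]
      exact hpt))
    (intervalIntegrable_const)
    (Filter.Eventually.of_forall (fun θ _ s _ => by
      have hline : HasDerivAt (fun s : ℂ => w + s • x + circleMap 0 1 θ • y) x s := by
        have := (((hasDerivAt_id s).smul_const x).const_add w).add_const
          (circleMap 0 1 θ • y)
        simpa using this
      have hcomp := (hu (w + s • x + circleMap 0 1 θ • y)).hasFDerivAt.comp_hasDerivAt s hline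
      exact (hcomp.const_smul (circleMap 0 1 θ ^ (-2:ℤ))).const_smul (circleMap 0 1 θ * I)))
  obtain ⟨hint, hder⟩ := key
  constructor
  · have hfun : (fun s : ℂ => fderiv ℂ u (w + s • x) y)
        = fun s : ℂ => (2 * π * I : ℂ)⁻¹ • ∫ θ in (0:ℝ)..(2*π), F s θ := by
      funext s
      exact fderiv_rep hu (w + s • x) y
    rw [hfun]
    have : HasDerivAt (fun s => (2 * π * I : ℂ)⁻¹ • ∫ θ in (0:ℝ)..(2*π), F s θ) _ 0 :=
      hder.const_smul ((2 * π * I : ℂ)⁻¹)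
    convert this using 2
    simp [mixedD, hF']
  · simpa [hF'] using hint

open MeasureTheory in
theorem mixedD_add {u : E → ℂ} (hu : Differentiable ℂ u) (w : E) (x₁ x₂ y : E) :
    mixedD u w (x₁ + x₂) y = mixedD u w x₁ y + mixedD u w x₂ y := by
  have h1 := (hasDerivAt_mixedD hu w x₁ y).2
  have h2 := (hasDerivAt_mixedD hu w x₂ y).2
  unfold mixedD
  rw [← smul_add, ← intervalIntegral.integral_add h1 h2]
  congr 1
  congr 1
  funext θ
  rw [← smul_add, ← smul_add]
  congr 1
  congr 1
  exact map_add _ _ _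

open MeasureTheory in
theorem mixedD_smul {u : E → ℂ} (hu : Differentiable ℂ u) (w : E) (c : ℂ) (x y : E) :
    mixedD u w (c • x) y = c * mixedD u w x y := by
  have h1 := (hasDerivAt_mixedD hu w x y).2
  unfold mixedD
  have : (fun θ => (circleMap 0 1 θ * I) •
      ((circleMap 0 1 θ ^ (-2:ℤ)) • fderiv ℂ u (w + circleMap 0 1 θ • y) (c • x)))
      = fun θ => c • ((circleMap 0 1 θ * I) •
      ((circleMap 0 1 θ ^ (-2:ℤ)) • fderiv ℂ u (w + circleMap 0 1 θ • y) x)) := by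
    funext θ
    rw [_root_.map_smul]
    rw [smul_comm (circleMap 0 1 θ ^ (-2:ℤ)) c, smul_comm (circleMap 0 1 θ * I) c]
  rw [this, intervalIntegral.integral_smul, smul_comm, smul_eq_mul]

theorem mixedD_zero {u : E → ℂ} (w y : E) : mixedD u w 0 y = 0 := by
  unfold mixedD
  simp

open Finset in
theorem mixedD_sum {u : E → ℂ} (hu : Differentiable ℂ u) (w y : E) {ι : Type*} [Fintype ι]
    (κ : ι → ℂ) (xs : ι → E) :
    mixedD u w (∑ a, κ a • xs a) y = ∑ a, κ a * mixedD u w (xs a) y := by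
  classical
  induction (univ : Finset ι) using Finset.induction with
  | empty => simp [mixedD_zero]
  | insert _ _ h ih =>
    rw [sum_insert h, sum_insert h, mixedD_add hu, mixedD_smul hu, ih]

theorem hasDerivAt_sum_mixedD {u : E → ℂ} (hu : Differentiable ℂ u) (w x : E)
    {ι' : Type*} [Fintype ι'] (κ : ι' → ℂ) (ys : ι' → E) :
    HasDerivAt (fun s : ℂ => ∑ b, κ b * fderiv ℂ u (w + s • x) (ys b))
      (∑ b, κ b * mixedD u w x (ys b)) 0 :=
  HasDerivAt.fun_sum (fun b _ => ((hasDerivAt_mixedD hu w x (ys b)).1.const_mul (κ b)))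

end Generic

section Concrete

variable {ι : Type} [DecidableEq ι] [Fintype ι]

/-- basis matrix with a `1` in position `(a, c)`. -/
def ebasis (a : Fin 2) (c : ι) : Fin 2 → ι → ℂ := fun a' c' => if a' = a ∧ c' = c then 1 else 0

theorem pd_eq_dd (a : Fin 2) (c : ι) (f : (Fin 2 → ι → ℂ) → ℂ) (z : Fin 2 → ι → ℂ) :
    pd a c f z = deriv (fun s : ℂ => f (z + s • ebasis a c)) 0 := by
  unfold pd
  congr 1
  funext s
  congr 1
  funext a' q'
  simp [ebasis, mul_ite]

theorem pd_eq_fderiv (a : Fin 2) (c : ι) {f : (Fin 2 → ι → ℂ) → ℂ}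
    (hf : Differentiable ℂ f) (z : Fin 2 → ι → ℂ) :
    pd a c f z = fderiv ℂ f z (ebasis a c) := by
  rw [pd_eq_dd]
  exact dderiv_eq hf z _

end Concrete

section Blocks

variable {ℓ : ℕ} {n : Fin ℓ → ℕ}

noncomputable def Lmap (hcoef : Fin ℓ → ℕ → ℂ) :
    (Fin 2 → Idx ℓ n → ℂ) →L[ℂ] (Fin 2 → Idx ℓ n → ℂ) :=
  LinearMap.toContinuousLinearMap
  { toFun := fun z a c => ∑ b : Fin (n c.1),
      if (b : ℕ) ≤ (c.2 : ℕ) then z a ⟨c.1, b⟩ * hcoef c.1 ((c.2 : ℕ) - (b : ℕ)) else 0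
    map_add' := by
      intro z₁ z₂
      funext a c
      simp only [Pi.add_apply, ← Finset.sum_add_distrib]
      congr 1
      funext b
      split <;> ring
    map_smul' := by
      intro m z
      funext a c
      simp only [Pi.smul_apply, smul_eq_mul, RingHom.id_apply, Finset.mul_sum]
      congr 1
      funext b
      split <;> ring }

theorem Lmap_apply (hcoef : Fin ℓ → ℕ → ℂ) (z : Fin 2 → Idx ℓ n → ℂ) (a : Fin 2)
    (c : Idx ℓ n) : Lmap hcoef z a c = ∑ b : Fin (n c.1),
      if (b : ℕ) ≤ (c.2 : ℕ) then z a ⟨c.1, b⟩ * hcoef c.1 ((c.2 : ℕ) - (b : ℕ)) else 0 := rfl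

theorem Lmap_ebasis (hcoef : Fin ℓ → ℕ → ℂ) (a : Fin 2) (i : Fin ℓ) (p : Fin (n i)) :
    Lmap hcoef (ebasis a (⟨i, p⟩ : Idx ℓ n)) = ∑ a' : Fin (n i),
      (if (p : ℕ) ≤ (a' : ℕ) then hcoef i ((a' : ℕ) - (p : ℕ)) else 0) •
        ebasis a (⟨i, a'⟩ : Idx ℓ n) := by
  funext a'' c''
  rw [Lmap_apply]
  rw [Finset.sum_apply, Finset.sum_apply]
  simp only [Pi.smul_apply, smul_eq_mul]
  by_cases ha : a'' = a
  · subst ha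
    obtain ⟨m, r⟩ := c''
    by_cases hm : m = i
    · subst hm
      have lhs_eq : ∀ b : Fin (n m),
          (if (b : ℕ) ≤ (r : ℕ) then
            ebasis a'' (⟨m, p⟩ : Idx ℓ n) a'' ⟨m, b⟩ * hcoef m ((r:ℕ) - (b:ℕ)) else 0)
          = if b = p then (if (p:ℕ) ≤ (r:ℕ) then hcoef m ((r:ℕ) - (p:ℕ)) else 0) else 0 := by
        intro b
        by_cases hbp : b = p
        · subst hbp
          simp [ebasis]
        · have : ebasis a'' (⟨m, p⟩ : Idx ℓ n) a'' ⟨m, b⟩ = 0 := by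
            simp [ebasis, hbp]
          simp [this, hbp]
      have rhs_eq : ∀ a' : Fin (n m),
          (if (p : ℕ) ≤ (a' : ℕ) then hcoef m ((a' : ℕ) - (p : ℕ)) else 0) *
            ebasis a'' (⟨m, a'⟩ : Idx ℓ n) a'' ⟨m, r⟩
          = if a' = r then (if (p:ℕ) ≤ (r:ℕ) then hcoef m ((r:ℕ) - (p:ℕ)) else 0) else 0 := by
        intro a'
        by_cases har : a' = r
        · subst har
          simp [ebasis]
        · have : ebasis a'' (⟨m, a'⟩ : Idx ℓ n) a'' ⟨m, r⟩ = 0 := by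
            simp [ebasis]
            intro h
            exact absurd h.symm har
          simp [this, har]
      calc (∑ b : Fin (n m), if (b : ℕ) ≤ (r : ℕ) then
              ebasis a'' (⟨m, p⟩ : Idx ℓ n) a'' ⟨m, b⟩ * hcoef m ((r:ℕ) - (b:ℕ)) else 0)
          = ∑ b : Fin (n m), if b = p then
              (if (p:ℕ) ≤ (r:ℕ) then hcoef m ((r:ℕ) - (p:ℕ)) else 0) else 0 := by
            exact Finset.sum_congr rfl (fun b _ => lhs_eq b)
        _ = (if (p:ℕ) ≤ (r:ℕ) then hcoef m ((r:ℕ) - (p:ℕ)) else 0) := by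
            rw [Finset.sum_ite_eq' Finset.univ p
              (fun _ => (if (p:ℕ) ≤ (r:ℕ) then hcoef m ((r:ℕ) - (p:ℕ)) else 0))]
            simp
        _ = ∑ a' : Fin (n m), (if a' = r then
              (if (p:ℕ) ≤ (r:ℕ) then hcoef m ((r:ℕ) - (p:ℕ)) else 0) else 0) := by
            rw [Finset.sum_ite_eq' Finset.univ r
              (fun _ => (if (p:ℕ) ≤ (r:ℕ) then hcoef m ((r:ℕ) - (p:ℕ)) else 0))]
            simp
        _ = _ := Finset.sum_congr rfl (fun a' _ => (rhs_eq a').symm)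
    · have h1 : ∀ b : Fin (n m), ebasis a'' (⟨i, p⟩ : Idx ℓ n) a'' ⟨m, b⟩ = 0 := by
        intro b
        simp [ebasis]
        intro h
        first
        | exact absurd h hm
        | exact absurd h (fun he => hm he.symm)
      have h2 : ∀ a' : Fin (n i), ebasis a'' (⟨i, a'⟩ : Idx ℓ n) a'' ⟨m, r⟩ = 0 := by
        intro a'
        simp [ebasis]
        intro h
        first
        | exact absurd h hm
        | exact absurd h (fun he => hm he.symm)
      simp [h1, h2]
  · simp [ebasis, ha]

end Blocks

theorem gelfand_system_invariant_under_Hlambda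
    (ℓ N : ℕ) (n : Fin ℓ → ℕ) (hn : ∀ j, 0 < n j) (hN : ∑ j, n j = N)
    (hcoef : Fin ℓ → ℕ → ℂ)
    (u v : (Fin 2 → Idx ℓ n → ℂ) → ℂ)
    (hu : Differentiable ℂ u)
    (zh : (Fin 2 → Idx ℓ n → ℂ) → (Fin 2 → Idx ℓ n → ℂ))
    (hzh : ∀ z (a : Fin 2) (c : Idx ℓ n),
      zh z a c = ∑ b : Fin (n c.1),
        if (b : ℕ) ≤ (c.2 : ℕ) then z a ⟨c.1, b⟩ * hcoef c.1 ((c.2 : ℕ) - (b : ℕ)) else 0)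
    (hv : ∀ z, v z = u (zh z)) :
    (∀ (i j : Fin ℓ) (p : Fin (n i)) (q : Fin (n j)) (z : Fin 2 → Idx ℓ n → ℂ),
      box (⟨i, p⟩ : Idx ℓ n) (⟨j, q⟩ : Idx ℓ n) v z
        = ∑ a : Fin (n i), ∑ b : Fin (n j),
            if (p : ℕ) ≤ (a : ℕ) ∧ (q : ℕ) ≤ (b : ℕ) then
              box (⟨i, a⟩ : Idx ℓ n) (⟨j, b⟩ : Idx ℓ n) u (zh z)
                * hcoef i ((a : ℕ) - (p : ℕ)) * hcoef j ((b : ℕ) - (q : ℕ))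
            else 0) ∧
    ((∀ (i j : Fin ℓ) (p : Fin (n i)) (q : Fin (n j)) (z : Fin 2 → Idx ℓ n → ℂ),
        box (⟨i, p⟩ : Idx ℓ n) (⟨j, q⟩ : Idx ℓ n) u z = 0) →
      ∀ (i j : Fin ℓ) (p : Fin (n i)) (q : Fin (n j)) (z : Fin 2 → Idx ℓ n → ℂ),
        box (⟨i, p⟩ : Idx ℓ n) (⟨j, q⟩ : Idx ℓ n) v z = 0) := by
  set L := Lmap (n := n) hcoef with hL
  have hzhL : zh = fun z => L z := by
    funext z a c
    rw [hzh, Lmap_apply]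
  have hv' : v = fun z => u (L z) := by
    funext z
    rw [hv, hzhL]
  set κP : ∀ i : Fin ℓ, Fin (n i) → Fin (n i) → ℂ :=
    fun i p a' => if (p : ℕ) ≤ (a' : ℕ) then hcoef i ((a' : ℕ) - (p : ℕ)) else 0 with hκP
  have step1 : ∀ (a : Fin 2) (i : Fin ℓ) (p : Fin (n i)),
      pd a (⟨i, p⟩ : Idx ℓ n) v
        = fun z => ∑ a', κP i p a' * fderiv ℂ u (L z) (ebasis a (⟨i, a'⟩ : Idx ℓ n)) := by
    intro a i p
    funext z
    rw [hv', pd_eq_dd]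
    have hfn : (fun s : ℂ => u (L (z + s • ebasis a (⟨i, p⟩ : Idx ℓ n))))
        = fun s : ℂ => u (L z + s • L (ebasis a (⟨i, p⟩ : Idx ℓ n))) := by
      funext s
      rw [map_add, ContinuousLinearMap.map_smul]
    rw [hfn, dderiv_eq hu (L z) _, Lmap_ebasis, map_sum]
    simp only [ContinuousLinearMap.map_smul, smul_eq_mul]
    rfl
  have step2 : ∀ (a₁ a₂ : Fin 2) (i j : Fin ℓ) (p : Fin (n i)) (q : Fin (n j))
      (z : Fin 2 → Idx ℓ n → ℂ),
      pd a₁ (⟨i, p⟩ : Idx ℓ n) (pd a₂ (⟨j, q⟩ : Idx ℓ n) v) z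
        = ∑ a : Fin (n i), ∑ b : Fin (n j), κP i p a * κP j q b *
            mixedD u (L z) (ebasis a₁ (⟨i, a⟩ : Idx ℓ n)) (ebasis a₂ (⟨j, b⟩ : Idx ℓ n)) := by
    intro a₁ a₂ i j p q z
    rw [pd_eq_dd, step1 a₂ j q]
    have hfn : (fun s : ℂ => ∑ b, κP j q b *
          fderiv ℂ u (L (z + s • ebasis a₁ (⟨i, p⟩ : Idx ℓ n))) (ebasis a₂ (⟨j, b⟩ : Idx ℓ n)))
        = fun s : ℂ => ∑ b, κP j q b *
          fderiv ℂ u (L z + s • L (ebasis a₁ (⟨i, p⟩ : Idx ℓ n)))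
            (ebasis a₂ (⟨j, b⟩ : Idx ℓ n)) := by
      funext s
      rw [map_add, ContinuousLinearMap.map_smul]
    rw [hfn, (hasDerivAt_sum_mixedD hu (L z) _ (κP j q) _).deriv]
    have expand : ∀ b : Fin (n j),
        mixedD u (L z) (L (ebasis a₁ (⟨i, p⟩ : Idx ℓ n))) (ebasis a₂ (⟨j, b⟩ : Idx ℓ n))
          = ∑ a : Fin (n i), κP i p a *
              mixedD u (L z) (ebasis a₁ (⟨i, a⟩ : Idx ℓ n)) (ebasis a₂ (⟨j, b⟩ : Idx ℓ n)) := by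
      intro b
      rw [Lmap_ebasis]
      exact mixedD_sum hu _ _ (κP i p) _
    calc (∑ b, κP j q b *
            mixedD u (L z) (L (ebasis a₁ (⟨i, p⟩ : Idx ℓ n))) (ebasis a₂ (⟨j, b⟩ : Idx ℓ n)))
        = ∑ b, ∑ a, κP j q b * (κP i p a *
            mixedD u (L z) (ebasis a₁ (⟨i, a⟩ : Idx ℓ n)) (ebasis a₂ (⟨j, b⟩ : Idx ℓ n))) := by
          refine Finset.sum_congr rfl (fun b _ => ?_)
          rw [expand b, Finset.mul_sum]
      _ = ∑ a, ∑ b, κP i p a * κP j q b *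
            mixedD u (L z) (ebasis a₁ (⟨i, a⟩ : Idx ℓ n)) (ebasis a₂ (⟨j, b⟩ : Idx ℓ n)) := by
          rw [Finset.sum_comm]
          exact Finset.sum_congr rfl (fun a _ => Finset.sum_congr rfl (fun b _ => by ring))
  have step3 : ∀ (a₁ a₂ : Fin 2) (i j : Fin ℓ) (a : Fin (n i)) (b : Fin (n j))
      (w : Fin 2 → Idx ℓ n → ℂ),
      pd a₁ (⟨i, a⟩ : Idx ℓ n) (pd a₂ (⟨j, b⟩ : Idx ℓ n) u) w
        = mixedD u w (ebasis a₁ (⟨i, a⟩ : Idx ℓ n)) (ebasis a₂ (⟨j, b⟩ : Idx ℓ n)) := by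
    intro a₁ a₂ i j a b w
    rw [pd_eq_dd]
    have hpd : pd a₂ (⟨j, b⟩ : Idx ℓ n) u
        = fun w' => fderiv ℂ u w' (ebasis a₂ (⟨j, b⟩ : Idx ℓ n)) :=
      funext fun w' => pd_eq_fderiv _ _ hu w'
    rw [hpd]
    exact (hasDerivAt_mixedD hu w _ _).1.deriv
  have main : ∀ (i j : Fin ℓ) (p : Fin (n i)) (q : Fin (n j)) (z : Fin 2 → Idx ℓ n → ℂ),
      box (⟨i, p⟩ : Idx ℓ n) (⟨j, q⟩ : Idx ℓ n) v z
        = ∑ a : Fin (n i), ∑ b : Fin (n j),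
            if (p : ℕ) ≤ (a : ℕ) ∧ (q : ℕ) ≤ (b : ℕ) then
              box (⟨i, a⟩ : Idx ℓ n) (⟨j, b⟩ : Idx ℓ n) u (zh z)
                * hcoef i ((a : ℕ) - (p : ℕ)) * hcoef j ((b : ℕ) - (q : ℕ))
            else 0 := by
    intro i j p q z
    show pd 0 (⟨i, p⟩ : Idx ℓ n) (pd 1 (⟨j, q⟩ : Idx ℓ n) v) z
        - pd 1 (⟨i, p⟩ : Idx ℓ n) (pd 0 (⟨j, q⟩ : Idx ℓ n) v) z = _
    rw [step2 0 1 i j p q z, step2 1 0 i j p q z, ← Finset.sum_sub_distrib]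
    refine Finset.sum_congr rfl (fun a _ => ?_)
    rw [← Finset.sum_sub_distrib]
    refine Finset.sum_congr rfl (fun b _ => ?_)
    have hbox : box (⟨i, a⟩ : Idx ℓ n) (⟨j, b⟩ : Idx ℓ n) u (zh z)
        = mixedD u (L z) (ebasis 0 (⟨i, a⟩ : Idx ℓ n)) (ebasis 1 (⟨j, b⟩ : Idx ℓ n))
          - mixedD u (L z) (ebasis 1 (⟨i, a⟩ : Idx ℓ n)) (ebasis 0 (⟨j, b⟩ : Idx ℓ n)) := by
      show pd 0 _ (pd 1 _ u) (zh z) - pd 1 _ (pd 0 _ u) (zh z) = _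
      rw [hzhL, step3 0 1, step3 1 0]
    rw [hbox]
    by_cases hpa : (p : ℕ) ≤ (a : ℕ) <;> by_cases hqb : (q : ℕ) ≤ (b : ℕ) <;>
      simp only [hκP, hpa, hqb, if_true, if_false, true_and, and_true, false_and, and_false,
        if_neg, ite_true, ite_false] <;> ring_nf <;> simp [hpa, hqb] <;> ring
  refine ⟨main, fun h0 i j p q z => ?_⟩
  rw [main i j p q z]
  refine Finset.sum_eq_zero (fun a _ => Finset.sum_eq_zero (fun b _ => ?_))
  rw [h0 i j a b (zh z)]
  simp
end

section
/- Let λ = (n_1,…,n_ℓ) be a partition of N and let z = (z^{(1)},…,z^{(ℓ)}) be a 2×N complex matrix written in blocks z^{(j)} of size 2×n_j with entries z^{(j)}_{a,k} (a ∈ {0,1}, 0 ≤ k < n_j), and assume z^{(j)}_{1,0} ≠ 0 for every j. Then there exists a unique h ∈ H_λ (block diagonal with invertible upper-triangular Toeplitz blocks h^{(j)}) such that for every j the second row of z^{(j)}·h^{(j)} equals (1,0,…,0); it is given by h^{(j)} = (Σ_{0≤k<n_j} z^{(j)}_{1,k} Λ^k)⁻¹, and then the first row of z^{(j)}·h^{(j)}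 equals (z^{(j)}_{0,0},…,z^{(j)}_{0,n_j−1})·(Σ_{0≤k<n_j} z^{(j)}_{1,k} Λ^k)⁻¹. -/
/-- The block-diagonal upper-triangular Toeplitz matrix with block coefficients `hc`. -/
def toep (ℓ : ℕ) (n : Fin ℓ → ℕ) (hc : (m : Fin ℓ) → Fin (n m) → ℂ) :
    Idx ℓ n → Idx ℓ n → ℂ :=
  fun p q =>
    if h : p.1 = q.1 then
      if (p.2 : ℕ) ≤ (q.2 : ℕ) then
        hc p.1 ⟨(q.2 : ℕ) - (p.2 : ℕ), by
          have h1 := q.2.isLt; have h2 : n p.1 = n q.1 := congrArg n h; omega⟩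
      else 0
    else 0

/-- The shift matrix `Λ` of size `m`, with `Λ_{a,b} = δ_{a+1,b}`. -/
def shiftM (m : ℕ) : Matrix (Fin m) (Fin m) ℂ :=
  Matrix.of fun a b => if (a : ℕ) + 1 = (b : ℕ) then 1 else 0

/-- Single-block upper-triangular Toeplitz matrix with coefficients `c`. -/
def T1 (m : ℕ) (c : Fin m → ℂ) : Matrix (Fin m) (Fin m) ℂ :=
  Matrix.of fun a b => if h : (a : ℕ) ≤ (b : ℕ) then
      c ⟨(b : ℕ) - (a : ℕ), by have := b.isLt; omega⟩ else 0

lemma mul_shift (m : ℕ) (M : Matrix (Fin m) (Fin m) ℂ) (a b : Fin m) :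
    (M * shiftM m) a b = if h : 1 ≤ (b : ℕ) then M a ⟨(b : ℕ) - 1, by have := b.isLt; omega⟩ else 0 := by
  rw [Matrix.mul_apply]
  split_ifs with h
  · rw [Finset.sum_eq_single (⟨(b:ℕ)-1, by have := b.isLt; omega⟩ : Fin m)]
    · simp [shiftM, Fin.ext_iff]; omega
    · intro t _ ht
      simp only [shiftM, Matrix.of_apply]
      rw [if_neg, mul_zero]
      intro hc; apply ht; exact Fin.ext (by simp only [Fin.val_mk]; omega)
    · simp
  · apply Finset.sum_eq_zero
    intro t _
    simp only [shiftM, Matrix.of_apply]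
    rw [if_neg (by omega), mul_zero]

lemma shift_mul (m : ℕ) (M : Matrix (Fin m) (Fin m) ℂ) (a b : Fin m) :
    (shiftM m * M) a b = if h : (a : ℕ) + 1 < m then M ⟨(a : ℕ) + 1, h⟩ b else 0 := by
  rw [Matrix.mul_apply]
  split_ifs with h
  · rw [Finset.sum_eq_single (⟨(a:ℕ)+1, h⟩ : Fin m)]
    · simp [shiftM]
    · intro t _ ht
      simp only [shiftM, Matrix.of_apply]
      rw [if_neg, zero_mul]
      intro hc; apply ht; exact Fin.ext (by simp only [Fin.val_mk]; omega)
    · simp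
  · apply Finset.sum_eq_zero
    intro t _
    simp only [shiftM, Matrix.of_apply]
    rw [if_neg (by have := t.isLt; omega), zero_mul]

lemma T1_comm_shift (m : ℕ) (c : Fin m → ℂ) :
    T1 m c * shiftM m = shiftM m * T1 m c := by
  ext a b
  rw [mul_shift, shift_mul]
  simp only [T1, Matrix.of_apply, Fin.val_mk]
  split_ifs <;>
    first
      | rfl
      | (exact congrArg c (Fin.ext (by simp only [Fin.val_mk]; omega)))
      | omega

lemma comm_shift_toep (m : ℕ) (hm : 0 < m) (M : Matrix (Fin m) (Fin m) ℂ)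
    (hM : M * shiftM m = shiftM m * M) :
    M = T1 m (fun k => M ⟨0, hm⟩ k) := by
  have key : ∀ K : ℕ, ∀ a b : Fin m, (a : ℕ) = K →
      M a b = if h : (a : ℕ) ≤ (b : ℕ) then
        M ⟨0, hm⟩ ⟨(b : ℕ) - (a : ℕ), by have := b.isLt; omega⟩ else 0 := by
    intro K
    induction K with
    | zero =>
      intro a b ha
      have : a = ⟨0, hm⟩ := Fin.ext ha
      subst this
      rw [dif_pos (by omega)]
      exact congrArg (M _) (Fin.ext (by simp))
    | succ k ih =>
      intro a b ha
      have hk : k < m := by have := a.isLt; omega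
      have h1 := congrFun (congrFun hM ⟨k, hk⟩) b
      rw [mul_shift, shift_mul] at h1
      rw [dif_pos (by simp only [Fin.val_mk]; omega : (⟨k, hk⟩ : Fin m).1 + 1 < m)] at h1
      have hab : (⟨(⟨k,hk⟩:Fin m).1+1, by simp only [Fin.val_mk]; omega⟩ : Fin m) = a :=
        Fin.ext (by simp only [Fin.val_mk]; omega)
      rw [hab] at h1
      rw [← h1]
      by_cases hb : 1 ≤ (b : ℕ)
      · rw [dif_pos hb, ih ⟨k, hk⟩ ⟨(b:ℕ)-1, by have := b.isLt; omega⟩ rfl]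
        simp only [Fin.val_mk]
        split_ifs with h2 h3 h3 <;> first
          | rfl
          | (exact congrArg (M _) (Fin.ext (by simp only [Fin.val_mk]; omega)))
          | omega
      · rw [dif_neg hb, dif_neg (by omega)]
  ext a b
  rw [key (a : ℕ) a b rfl]
  simp only [T1, Matrix.of_apply]

lemma pow_shift (m k : ℕ) (a b : Fin m) :
    (shiftM m ^ k) a b = if (a : ℕ) + k = (b : ℕ) then 1 else 0 := by
  induction k generalizing b with
  | zero => simp [Matrix.one_apply, Fin.ext_iff]
  | succ k ih =>
    rw [pow_succ, mul_shift]
    split_ifs with h1 h2 h2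
    · rw [ih]; simp only [Fin.val_mk]; rw [if_pos (by omega)]
    · rw [ih]; simp only [Fin.val_mk]; rw [if_neg (by omega)]
    · omega
    · rfl

lemma sum_smul_pow (m : ℕ) (c : Fin m → ℂ) :
    (∑ k : Fin m, c k • shiftM m ^ (k : ℕ)) = T1 m c := by
  ext a b
  rw [Matrix.sum_apply]
  simp only [Finset.sum_apply, Matrix.smul_apply, pow_shift, smul_eq_mul, T1, Matrix.of_apply]
  by_cases hab : (a : ℕ) ≤ (b : ℕ)
  · rw [dif_pos hab,
      Finset.sum_eq_single (⟨(b:ℕ)-(a:ℕ), by have := b.isLt; omega⟩ : Fin m)]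
    · rw [if_pos (by simp only [Fin.val_mk]; omega), mul_one]
    · intro t _ ht
      rw [if_neg, mul_zero]
      intro hc; exact ht (Fin.ext (by simp only [Fin.val_mk]; omega))
    · simp
  · rw [dif_neg hab]
    apply Finset.sum_eq_zero
    intro t _
    rw [if_neg (by omega), mul_zero]

lemma T1_diag (m : ℕ) (hm : 0 < m) (c : Fin m → ℂ) (a : Fin m) :
    T1 m c a a = c ⟨0, hm⟩ := by
  simp only [T1, Matrix.of_apply, dif_pos le_rfl]
  exact congrArg c (Fin.ext (by simp))

lemma T1_det (m : ℕ) (hm : 0 < m) (c : Fin m → ℂ) :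
    (T1 m c).det = c ⟨0, hm⟩ ^ m := by
  rw [Matrix.det_of_upperTriangular]
  · rw [Finset.prod_congr rfl (fun a _ => T1_diag m hm c a)]
    simp
  · intro i j hij
    simp only [T1, Matrix.of_apply]
    rw [dif_neg (by exact_mod_cast Nat.not_le.mpr hij)]

lemma T1_one (m : ℕ) :
    T1 m (fun k => if (k : ℕ) = 0 then 1 else 0) = 1 := by
  ext a b
  simp only [T1, Matrix.of_apply, Matrix.one_apply, Fin.ext_iff]
  split_ifs <;> simp_all <;> omega

lemma block_main (m : ℕ) (hm : 0 < m) (c : Fin m → ℂ) (hc0 : c ⟨0, hm⟩ ≠ 0)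
    (Zm : Matrix (Fin m) (Fin m) ℂ) (hZm : Zm = T1 m c) :
    (∀ d : Fin m → ℂ,
       (∀ q : Fin m, (∑ a : Fin m, c a * T1 m d a q) = if (q : ℕ) = 0 then 1 else 0) →
       T1 m d = Zm⁻¹) ∧
    T1 m (fun k => Zm⁻¹ ⟨0, hm⟩ k) = Zm⁻¹ ∧
    Zm⁻¹ ⟨0, hm⟩ ⟨0, hm⟩ ≠ 0 ∧
    (∀ q : Fin m, (∑ a : Fin m, c a * Zm⁻¹ a q) = if (q : ℕ) = 0 then 1 else 0) := by
  have hdet : IsUnit Zm.det := by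
    rw [hZm, T1_det m hm]
    exact isUnit_iff_ne_zero.mpr (pow_ne_zero _ hc0)
  have hZinv_mul : Zm * Zm⁻¹ = 1 := Matrix.mul_nonsing_inv _ hdet
  have hinv_Zmul : Zm⁻¹ * Zm = 1 := Matrix.nonsing_inv_mul _ hdet
  have hrow : ∀ a : Fin m, Zm ⟨0, hm⟩ a = c a := by
    intro a
    rw [hZm]
    simp only [T1, Matrix.of_apply, Fin.val_mk, dif_pos (Nat.zero_le _)]
    exact congrArg c (Fin.ext (by simp))
  have hcommZ : Zm * shiftM m = shiftM m * Zm := by rw [hZm]; exact T1_comm_shift m c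
  have hcommInv : Zm⁻¹ * shiftM m = shiftM m * Zm⁻¹ := by
    calc Zm⁻¹ * shiftM m = Zm⁻¹ * shiftM m * (Zm * Zm⁻¹) := by rw [hZinv_mul, mul_one]
      _ = Zm⁻¹ * (shiftM m * Zm) * Zm⁻¹ := by simp only [mul_assoc]
      _ = Zm⁻¹ * (Zm * shiftM m) * Zm⁻¹ := by rw [hcommZ]
      _ = shiftM m * Zm⁻¹ := by
          rw [← mul_assoc, hinv_Zmul, one_mul]
  have hB : T1 m (fun k => Zm⁻¹ ⟨0, hm⟩ k) = Zm⁻¹ :=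
    (comm_shift_toep m hm Zm⁻¹ hcommInv).symm
  have hA : ∀ d : Fin m → ℂ,
      (∀ q : Fin m, (∑ a : Fin m, c a * T1 m d a q) = if (q : ℕ) = 0 then 1 else 0) →
      T1 m d = Zm⁻¹ := by
    intro d hd
    have hcommP : (Zm * T1 m d) * shiftM m = shiftM m * (Zm * T1 m d) := by
      calc (Zm * T1 m d) * shiftM m = Zm * (T1 m d * shiftM m) := by rw [mul_assoc]
        _ = Zm * (shiftM m * T1 m d) := by rw [T1_comm_shift]
        _ = (Zm * shiftM m) * T1 m d := by rw [mul_assoc]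
        _ = (shiftM m * Zm) * T1 m d := by rw [hcommZ]
        _ = shiftM m * (Zm * T1 m d) := by rw [mul_assoc]
    have hrow0 : ∀ q : Fin m, (Zm * T1 m d) ⟨0, hm⟩ q = if (q : ℕ) = 0 then 1 else 0 := by
      intro q
      rw [Matrix.mul_apply, ← hd q]
      exact Finset.sum_congr rfl fun a _ => by rw [hrow]
    have : Zm * T1 m d = 1 := by
      rw [comm_shift_toep m hm _ hcommP, ← T1_one m]
      exact congrArg (T1 m) (funext hrow0)
    exact (Matrix.inv_eq_right_inv this).symm
  refine ⟨hA, hB, ?_, ?_⟩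
  · have h00 := congrFun (congrFun hZinv_mul ⟨0, hm⟩) ⟨0, hm⟩
    rw [Matrix.mul_apply, Matrix.one_apply_eq] at h00
    rw [Finset.sum_eq_single (⟨0, hm⟩ : Fin m)] at h00
    · intro hzero
      rw [hzero, mul_zero] at h00
      exact zero_ne_one h00
    · intro a _ ha
      rw [← hB]
      simp only [T1, Matrix.of_apply]
      have hval : (a : ℕ) ≠ 0 := fun h => ha (Fin.ext h)
      rw [dif_neg (by show ¬((a : ℕ) ≤ 0); omega), mul_zero]
    · simp
  · intro q
    have : (∑ a : Fin m, c a * Zm⁻¹ a q) = (Zm * Zm⁻¹) ⟨0, hm⟩ q := by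
      rw [Matrix.mul_apply]
      exact Finset.sum_congr rfl fun a _ => by rw [hrow]
    rw [this, hZinv_mul, Matrix.one_apply]
    simp [Fin.ext_iff, eq_comm]

lemma toep_block (ℓ : ℕ) (n : Fin ℓ → ℕ) (hc : (m : Fin ℓ) → Fin (n m) → ℂ)
    (j : Fin ℓ) (a b : Fin (n j)) :
    toep ℓ n hc ⟨j, a⟩ ⟨j, b⟩ = T1 (n j) (hc j) a b := by
  simp only [toep, T1, Matrix.of_apply]
  rw [dif_pos trivial]
  split_ifs <;> rfl

lemma toep_off (ℓ : ℕ) (n : Fin ℓ → ℕ) (hc : (m : Fin ℓ) → Fin (n m) → ℂ)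
    (p q : Idx ℓ n) (hpq : p.1 ≠ q.1) :
    toep ℓ n hc p q = 0 := by
  simp [toep, hpq]

lemma sum_idx (ℓ : ℕ) (n : Fin ℓ → ℕ) (hc : (m : Fin ℓ) → Fin (n m) → ℂ)
    (v : Idx ℓ n → ℂ) (j : Fin ℓ) (q : Fin (n j)) :
    (∑ b : Idx ℓ n, v b * toep ℓ n hc b ⟨j, q⟩) =
      ∑ a : Fin (n j), v ⟨j, a⟩ * T1 (n j) (hc j) a q := by
  rw [← Finset.univ_sigma_univ, Finset.sum_sigma]
  rw [Finset.sum_eq_single j]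
  · exact Finset.sum_congr rfl fun a _ => by rw [toep_block]
  · intro j' _ hj'
    apply Finset.sum_eq_zero
    intro a _
    rw [toep_off ℓ n hc ⟨j', a⟩ ⟨j, q⟩ hj', mul_zero]
  · simp

theorem normalization_of_second_row_by_Hlambda
    (ℓ N : ℕ) (n : Fin ℓ → ℕ) (hn : ∀ j, 0 < n j) (hN : ∑ j, n j = N)
    (z : Fin 2 → Idx ℓ n → ℂ)
    (hz : ∀ j : Fin ℓ, z 1 ⟨j, ⟨0, hn j⟩⟩ ≠ 0)
    (Z : (j : Fin ℓ) → Matrix (Fin (n j)) (Fin (n j)) ℂ)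
    (hZ : ∀ j : Fin ℓ, Z j = ∑ k : Fin (n j), z 1 ⟨j, k⟩ • shiftM (n j) ^ (k : ℕ)) :
    (∃! h : Idx ℓ n → Idx ℓ n → ℂ,
      (∃ hc : (m : Fin ℓ) → Fin (n m) → ℂ,
        (∀ m : Fin ℓ, hc m ⟨0, hn m⟩ ≠ 0) ∧ h = toep ℓ n hc) ∧
      (∀ (j : Fin ℓ) (q : Fin (n j)),
        (∑ b : Idx ℓ n, z 1 b * h b ⟨j, q⟩) = if (q : ℕ) = 0 then 1 else 0)) ∧
    (∀ h : Idx ℓ n → Idx ℓ n → ℂ,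
      (∃ hc : (m : Fin ℓ) → Fin (n m) → ℂ,
        (∀ m : Fin ℓ, hc m ⟨0, hn m⟩ ≠ 0) ∧ h = toep ℓ n hc) →
      (∀ (j : Fin ℓ) (q : Fin (n j)),
        (∑ b : Idx ℓ n, z 1 b * h b ⟨j, q⟩) = if (q : ℕ) = 0 then 1 else 0) →
      (∀ (j : Fin ℓ) (a b : Fin (n j)), h ⟨j, a⟩ ⟨j, b⟩ = (Z j)⁻¹ a b) ∧
      (∀ (j : Fin ℓ) (q : Fin (n j)),
        (∑ b : Idx ℓ n, z 0 b * h b ⟨j, q⟩) = ∑ a : Fin (n j), z 0 ⟨j, a⟩ * (Z j)⁻¹ a q)) := by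
  -- per-block data
  have hZT : ∀ j : Fin ℓ, Z j = T1 (n j) (fun k => z 1 ⟨j, k⟩) := by
    intro j; rw [hZ j]; exact sum_smul_pow _ _
  have main := fun j : Fin ℓ =>
    block_main (n j) (hn j) (fun k => z 1 ⟨j, k⟩) (hz j) (Z j) (hZT j)
  -- the canonical witness
  set hc0 : (m : Fin ℓ) → Fin (n m) → ℂ := fun m k => (Z m)⁻¹ ⟨0, hn m⟩ k with hhc0
  -- key: any toep solution has blocks equal to (Z j)⁻¹
  have keyU : ∀ hc : (m : Fin ℓ) → Fin (n m) → ℂ,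
      (∀ (j : Fin ℓ) (q : Fin (n j)),
        (∑ b : Idx ℓ n, z 1 b * toep ℓ n hc b ⟨j, q⟩) = if (q : ℕ) = 0 then 1 else 0) →
      ∀ j : Fin ℓ, T1 (n j) (hc j) = (Z j)⁻¹ := by
    intro hc hcond j
    exact (main j).1 (hc j) (fun q => by rw [← sum_idx ℓ n hc (z 1) j q]; exact hcond j q)
  -- the witness satisfies the condition
  have hwit_cond : ∀ (j : Fin ℓ) (q : Fin (n j)),
      (∑ b : Idx ℓ n, z 1 b * toep ℓ n hc0 b ⟨j, q⟩) = if (q : ℕ) = 0 then 1 else 0 := by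
    intro j q
    rw [sum_idx]
    have hT : T1 (n j) (hc0 j) = (Z j)⁻¹ := (main j).2.1
    rw [hT]
    exact (main j).2.2.2 q
  have hwit_ne : ∀ m : Fin ℓ, hc0 m ⟨0, hn m⟩ ≠ 0 := fun m => (main m).2.2.1
  -- uniqueness of toep solutions
  have huniq : ∀ h' : Idx ℓ n → Idx ℓ n → ℂ,
      (∃ hc : (m : Fin ℓ) → Fin (n m) → ℂ,
        (∀ m : Fin ℓ, hc m ⟨0, hn m⟩ ≠ 0) ∧ h' = toep ℓ n hc) →
      (∀ (j : Fin ℓ) (q : Fin (n j)),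
        (∑ b : Idx ℓ n, z 1 b * h' b ⟨j, q⟩) = if (q : ℕ) = 0 then 1 else 0) →
      h' = toep ℓ n hc0 := by
    rintro h' ⟨hc, _, rfl⟩ hcond
    have hT := keyU hc hcond
    funext p q
    rcases p with ⟨j1, a⟩
    rcases q with ⟨j2, b⟩
    by_cases hj : j1 = j2
    · subst hj
      rw [toep_block, toep_block, hT j1]
      rw [← (main j1).2.1]
    · rw [toep_off ℓ n hc _ _ hj, toep_off ℓ n hc0 _ _ hj]
  constructor
  · refine ⟨toep ℓ n hc0, ⟨⟨hc0, hwit_ne, rfl⟩, hwit_cond⟩, ?_⟩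
    rintro h' ⟨hex, hcond⟩
    exact huniq h' hex hcond
  · rintro h ⟨hc, hne, rfl⟩ hcond
    have hT := keyU hc hcond
    constructor
    · intro j a b
      rw [toep_block, hT j]
    · intro j q
      rw [sum_idx, hT j]
end

section
/- Let α, β ∈ ℂ∖ℤ and A ∈ ℂ, A ≠ 0. Set p(α,β;m) = (α+m)(β−m+1) for m ∈ ℤ, and define constants T_m by T_0 = 1, T_1 = A, T_m = A^m·∏_{k=0}^{m−1}(∏_{l=1}^{k} p(α,β;l)) for m ≥ 2, and T_m = A^m·∏_{k=1}^{−m}(∏_{l=−k+1}^{0} p(α,β;l)) for m ≤ −1. On the open set Ω = {(x,y) ∈ ℂ² : x−y ∉ (−∞,0]} (so that the principal complex power is holomorphic), the functions t_m(x,y) = (x−y)^{p(α,β;m)}·T_m satisfy the bilinear 2dTHE: t_m·∂x∂y t_m − (∂x t_m)·(∂y t_m) = t_{m+1}·t_{m−1} on Ω for every m ∈ ℤ. -/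
lemma slit_of (z : ℂ) (h : ∀ r : ℝ, r ≤ 0 → z ≠ (r : ℂ)) : z ∈ Complex.slitPlane := by
  rw [Complex.mem_slitPlane_iff]
  by_contra hc
  push_neg at hc
  exact h z.re hc.1 (Complex.ext (by simp) (by simp [hc.2])).symm

lemma hdx (w c T s : ℂ) (h : s - c ∈ Complex.slitPlane) :
    HasDerivAt (fun u => (u - c) ^ w * T) (w * (s - c) ^ (w - 1) * T) s := by
  have h1 : HasDerivAt (fun u : ℂ => u - c) 1 s := (hasDerivAt_id s).sub_const c
  simpa using (h1.cpow_const h).mul_const T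

lemma hdy (w c T s : ℂ) (h : c - s ∈ Complex.slitPlane) :
    HasDerivAt (fun u => (c - u) ^ w * T) (-(w * (c - s) ^ (w - 1)) * T) s := by
  have h1 : HasDerivAt (fun u : ℂ => c - u) (-1) s := (hasDerivAt_id s).const_sub c
  have := (h1.cpow_const (c := w) h).mul_const T
  rw [show -(w * (c - s) ^ (w - 1)) * T = w * (c - s) ^ (w - 1) * -1 * T by ring]
  exact this



theorem seed_solution_epd_case
    (α β : ℂ) (hα : ∀ m : ℤ, α ≠ (m : ℂ)) (hβ : ∀ m : ℤ, β ≠ (m : ℂ))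
    (A : ℂ) (hA : A ≠ 0)
    (pf : ℤ → ℂ) (hpf : ∀ m : ℤ, pf m = (α + (m : ℂ)) * (β - (m : ℂ) + 1))
    (T : ℤ → ℂ) (hT0 : T 0 = 1) (hT1 : T 1 = A)
    (hTpos : ∀ m : ℤ, 2 ≤ m →
      T m = A ^ m * ∏ k ∈ Finset.range m.toNat, ∏ l ∈ Finset.range k, pf ((l : ℤ) + 1))
    (hTneg : ∀ m : ℤ, m ≤ -1 →
      T m = A ^ m * ∏ k ∈ Finset.range (-m).toNat, ∏ l ∈ Finset.range (k + 1), pf (-(l : ℤ)))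
    (Ω : Set (ℂ × ℂ))
    (hΩ : Ω = {P : ℂ × ℂ | ∀ r : ℝ, r ≤ 0 → P.1 - P.2 ≠ (r : ℂ)})
    (t : ℤ → ℂ × ℂ → ℂ)
    (ht : ∀ (m : ℤ) (P : ℂ × ℂ), t m P = (P.1 - P.2) ^ pf m * T m) :
    ∀ m : ℤ, ∀ P ∈ Ω,
      t m P * pdx (pdy (t m)) P - pdx (t m) P * pdy (t m) P = t (m + 1) P * t (m - 1) P := by
  -- positive-side closed formula valid for all naturals
  have hTpos' : ∀ n : ℕ, T (n : ℤ) =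
      A ^ (n : ℤ) * ∏ k ∈ Finset.range n, ∏ l ∈ Finset.range k, pf ((l : ℤ) + 1) := by
    intro n
    match n with
    | 0 => simpa using hT0
    | 1 => simpa using hT1
    | (n+2) =>
      rw [hTpos _ (by push_cast; omega)]
      simp only [Int.toNat_natCast]
  have hTneg' : ∀ n : ℕ, T (-(n : ℤ)) =
      A ^ (-(n : ℤ)) * ∏ k ∈ Finset.range n, ∏ l ∈ Finset.range (k + 1), pf (-(l : ℤ)) := by
    intro n
    match n with
    | 0 => simpa using hT0
    | (n+1) =>
      rw [hTneg _ (by push_cast; omega)]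
      simp only [neg_neg, Int.toNat_natCast]
  -- the Toda recursion for the constants
  have hTT : ∀ m : ℤ, T (m + 1) * T (m - 1) = pf m * T m ^ 2 := by
    intro m
    rcases lt_trichotomy m 0 with h | h | h
    · obtain ⟨n, rfl⟩ : ∃ n : ℕ, m = -((n : ℤ) + 1) := ⟨(-m - 1).toNat, by omega⟩
      rw [show -((n:ℤ)+1) + 1 = -((n:ℕ):ℤ) by ring,
          show -((n:ℤ)+1) - 1 = -(((n+2:ℕ)):ℤ) by push_cast; ring,
          show -((n:ℤ)+1) = -(((n+1:ℕ)):ℤ) by push_cast; ring]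
      rw [hTneg' n, hTneg' (n+2), hTneg' (n+1)]
      simp only [Finset.prod_range_succ, zpow_neg, zpow_natCast]
      field_simp
      push_cast
      ring
    · subst h
      rw [show (0:ℤ) + 1 = 1 by ring, show (0:ℤ) - 1 = -((1:ℕ):ℤ) by norm_num, hT1, hT0,
        hTneg' 1]
      simp only [Finset.prod_range_succ, Finset.prod_range_zero, zpow_neg, zpow_natCast]
      push_cast
      field_simp
      simp
    · obtain ⟨n, rfl⟩ : ∃ n : ℕ, m = ((n : ℤ) + 1) := ⟨(m - 1).toNat, by omega⟩
      rw [show (n:ℤ)+1 + 1 = (((n+2:ℕ)):ℤ) by push_cast; ring,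
          show (n:ℤ)+1 - 1 = ((n:ℕ):ℤ) by push_cast; ring,
          show (n:ℤ)+1 = (((n+1:ℕ)):ℤ) by push_cast; ring]
      rw [hTpos' n, hTpos' (n+2), hTpos' (n+1)]
      simp only [Finset.prod_range_succ, zpow_natCast]
      push_cast
      ring
  intro m P hP
  obtain ⟨x, y⟩ := P
  have hz : x - y ∈ Complex.slitPlane := by
    apply slit_of
    rw [hΩ] at hP
    exact hP
  have hz0 : x - y ≠ 0 := Complex.slitPlane_ne_zero hz
  have hpdx : pdx (t m) (x, y) = pf m * (x - y) ^ (pf m - 1) * T m := by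
    unfold pdx
    have he : (fun s => t m (s, y)) = fun s => (s - y) ^ pf m * T m :=
      funext fun s => ht m (s, y)
    simp only [he]
    exact (hdx (pf m) y (T m) x hz).deriv
  have hpdy : ∀ a b : ℂ, a - b ∈ Complex.slitPlane →
      pdy (t m) (a, b) = (a - b) ^ (pf m - 1) * (-(pf m) * T m) := by
    intro a b h
    unfold pdy
    have he : (fun s => t m (a, s)) = fun s => (a - s) ^ pf m * T m :=
      funext fun s => ht m (a, s)
    simp only [he]
    rw [(hdy (pf m) a (T m) b h).deriv]
    ring
  have hpxy : pdx (pdy (t m)) (x, y) = (pf m - 1) * (x - y) ^ (pf m - 2) * (-(pf m) * T m) := by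
    unfold pdx
    have hev : (fun s => pdy (t m) (s, y)) =ᶠ[nhds x]
        fun s => (s - y) ^ (pf m - 1) * (-(pf m) * T m) := by
      have hopen : IsOpen {s : ℂ | s - y ∈ Complex.slitPlane} :=
        Complex.isOpen_slitPlane.preimage (continuous_id.sub continuous_const)
      filter_upwards [hopen.mem_nhds (show x ∈ _ from hz)] with s hs
      exact hpdy s y hs
    rw [hev.deriv_eq]
    have := (hdx (pf m - 1) y (-(pf m) * T m) x hz).deriv
    rw [show pf m - 1 - 1 = pf m - 2 by ring] at this
    simpa using this
  have e1 : (x - y) ^ pf m * (x - y) ^ (pf m - 2) =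
      (x - y) ^ (pf m - 1) * (x - y) ^ (pf m - 1) := by
    rw [← Complex.cpow_add _ _ hz0, ← Complex.cpow_add _ _ hz0]
    ring_nf
  have e2 : (x - y) ^ pf (m + 1) * (x - y) ^ pf (m - 1) =
      (x - y) ^ (pf m - 1) * (x - y) ^ (pf m - 1) := by
    rw [← Complex.cpow_add _ _ hz0, ← Complex.cpow_add _ _ hz0]
    congr 1
    rw [hpf, hpf, hpf]
    push_cast
    ring
  rw [ht m (x, y), ht (m + 1) (x, y), ht (m - 1) (x, y), hpdx, hpxy, hpdy x y hz]
  simp only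
  linear_combination (-(pf m) * (pf m - 1) * T m ^ 2) * e1 + (-(pf m) * T m ^ 2) * e2 +
    (-((x - y) ^ pf (m + 1) * (x - y) ^ pf (m - 1))) * hTT m
end
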